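/- arXiv:1504.04527 — 16 statements merged into one kernel-verified Lean document; each statement's English description precedes it below -/
import Mathlib

section
/- Suppose the column space of B is contained in that of A and the column space of Cᵀ is contained in that of Aᵀ. Let H be the block matrix [[A†, -A†B],[CA†, D - CA†B]]. Then M[x¹;x²] = [AA†y¹; y²] if and only if H[y¹;x²] = [A†Ax¹; y²]. -/
open Matrix LinearMap

/-- `X` is the Moore-Penrose inverse of `A`. -/
def IsMoorePenrose {α β : Type*} [Fintype α] [Fintype β] [DecidableEq α] [DecidableEq β]
    (A : Matrix α β ℝ) (X : Matrix β α ℝ) : Prop :=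
  A * X * A = A ∧ X * A * X = X ∧ (A * X)ᵀ = A * X ∧ (X * A)ᵀ = X * A

private lemma ext_mulVec {a b : ℕ} {M N : Matrix (Fin a) (Fin b) ℝ}
    (h : ∀ v, M.mulVec v = N.mulVec v) : M = N := by
  ext i j
  have := congrFun (h (Pi.single j 1)) i
  simpa [Matrix.mulVec_single] using this

theorem stmt0
    {m n s p : ℕ}
    (A : Matrix (Fin m) (Fin n) ℝ) (B : Matrix (Fin m) (Fin p) ℝ)
    (C : Matrix (Fin s) (Fin n) ℝ) (D : Matrix (Fin s) (Fin p) ℝ)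
    (Ad : Matrix (Fin n) (Fin m) ℝ) (hA : IsMoorePenrose A Ad)
    (hB : LinearMap.range (Matrix.mulVecLin (B)) ≤ LinearMap.range (Matrix.mulVecLin (A)))
    (hC : LinearMap.range (Matrix.mulVecLin (Cᵀ)) ≤ LinearMap.range (Matrix.mulVecLin (Aᵀ)))
    (x1 : Fin n → ℝ) (x2 : Fin p → ℝ) (y1 : Fin m → ℝ) (y2 : Fin s → ℝ) :
    (Matrix.fromBlocks A B C D).mulVec (Sum.elim x1 x2)
        = Sum.elim ((A * Ad).mulVec y1) y2 ↔
    (Matrix.fromBlocks Ad (-(Ad * B)) (C * Ad) (D - C * Ad * B)).mulVec (Sum.elim y1 x2)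
        = Sum.elim ((Ad * A).mulVec x1) y2 := by
  obtain ⟨h1, h2, h3, h4⟩ := hA
  have hAB : A * Ad * B = B := by
    apply ext_mulVec
    intro v
    obtain ⟨w, hw⟩ := hB ⟨v, rfl⟩
    simp only [Matrix.mulVecLin_apply] at hw
    rw [← Matrix.mulVec_mulVec, ← hw, Matrix.mulVec_mulVec, h1]
  have hAAt : Ad * A * Aᵀ = Aᵀ := by
    rw [← h4, ← Matrix.transpose_mul, ← Matrix.mul_assoc, h1]
  have hCt : Ad * A * Cᵀ = Cᵀ := by
    apply ext_mulVec
    intro v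
    obtain ⟨w, hw⟩ := hC ⟨v, rfl⟩
    simp only [Matrix.mulVecLin_apply] at hw
    rw [← Matrix.mulVec_mulVec, ← hw, Matrix.mulVec_mulVec, hAAt]
  have hCA : C * Ad * A = C := by
    have := congrArg Matrix.transpose hCt
    rw [Matrix.transpose_mul, Matrix.transpose_transpose, h4, ← Matrix.mul_assoc] at this
    exact this
  rw [Matrix.fromBlocks_mulVec, Matrix.fromBlocks_mulVec]
  simp only [Sum.elim_comp_inl, Sum.elim_comp_inr]
  constructor
  · intro h
    have htop' : A.mulVec x1 + B.mulVec x2 = (A * Ad).mulVec y1 :=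
      funext fun i => congrFun h (Sum.inl i)
    have hbot' : C.mulVec x1 + D.mulVec x2 = y2 :=
      funext fun i => congrFun h (Sum.inr i)
    have hmid : (Ad * A).mulVec x1 + (Ad * B).mulVec x2 = Ad.mulVec y1 := by
      have := congrArg (Ad.mulVec) htop'
      rwa [Matrix.mulVec_add, Matrix.mulVec_mulVec, Matrix.mulVec_mulVec,
        Matrix.mulVec_mulVec, ← Matrix.mul_assoc, h2] at this
    have e1 : Ad.mulVec y1 + (-(Ad * B)).mulVec x2 = (Ad * A).mulVec x1 := by
      rw [Matrix.neg_mulVec, ← hmid]; abel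
    have e2 : (C * Ad).mulVec y1 + (D - C * Ad * B).mulVec x2 = y2 := by
      have hc2 : C.mulVec x1 + (C * Ad * B).mulVec x2 = (C * Ad).mulVec y1 := by
        have := congrArg (C.mulVec) hmid
        rwa [Matrix.mulVec_add, Matrix.mulVec_mulVec, Matrix.mulVec_mulVec,
          Matrix.mulVec_mulVec, ← Matrix.mul_assoc, ← Matrix.mul_assoc, hCA] at this
      rw [← hbot', Matrix.sub_mulVec, ← hc2]; abel
    funext i
    cases i with
    | inl i => exact congrFun e1 i
    | inr i => exact congrFun e2 i
  · intro h
    have htop' : Ad.mulVec y1 + (-(Ad * B)).mulVec x2 = (Ad * A).mulVec x1 :=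
      funext fun i => congrFun h (Sum.inl i)
    have hbot' : (C * Ad).mulVec y1 + (D - C * Ad * B).mulVec x2 = y2 :=
      funext fun i => congrFun h (Sum.inr i)
    have e1 : A.mulVec x1 + B.mulVec x2 = (A * Ad).mulVec y1 := by
      have h' := congrArg (A.mulVec) htop'
      rw [Matrix.mulVec_add, Matrix.neg_mulVec, Matrix.mulVec_neg, Matrix.mulVec_mulVec,
        Matrix.mulVec_mulVec, Matrix.mulVec_mulVec, ← Matrix.mul_assoc, ← Matrix.mul_assoc,
        h1, hAB] at h'
      rw [← h']; abel
    have e2 : C.mulVec x1 + D.mulVec x2 = y2 := by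
      have h' := congrArg (C.mulVec) htop'
      rw [Matrix.mulVec_add, Matrix.neg_mulVec, Matrix.mulVec_neg, Matrix.mulVec_mulVec,
        Matrix.mulVec_mulVec, Matrix.mulVec_mulVec, ← Matrix.mul_assoc, ← Matrix.mul_assoc,
        hCA] at h'
      rw [← hbot', Matrix.sub_mulVec, ← h']; abel
    funext i
    cases i with
    | inl i => exact congrFun e1 i
    | inr i => exact congrFun e2 i
end

section
/- If R(B) ⊆ R(A), R(Cᵀ) ⊆ R(Aᵀ), R(C) ⊆ R(D), and R(Bᵀ) ⊆ R(Dᵀ), then J is the Moore-Penrose inverse of H, i.e., H† = J, where H = [[A†, -A†B],[CA†, D - CA†B]] and J = [[A - BD†C, BD†],[-D†C, D†]]. -/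
open Matrix LinearMap

lemma factor_aux {m n p : ℕ} {A : Matrix (Fin m) (Fin n) ℝ} {B : Matrix (Fin m) (Fin p) ℝ}
    (h : LinearMap.range B.mulVecLin ≤ LinearMap.range A.mulVecLin) :
    ∃ X : Matrix (Fin n) (Fin p) ℝ, A * X = B := by
  choose x hx using fun j => h (LinearMap.mem_range_self _ (Pi.single j 1))
  refine ⟨Matrix.of (fun i j => x j i), ?_⟩
  ext i j
  have h2 := congrFun (hx j) i
  simp [Matrix.mulVecLin_apply, Matrix.mulVec_single] at h2
  simpa [Matrix.mul_apply, Matrix.mulVec, dotProduct] using h2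

theorem stmt2
    {m n s p : ℕ}
    (A : Matrix (Fin m) (Fin n) ℝ) (B : Matrix (Fin m) (Fin p) ℝ)
    (C : Matrix (Fin s) (Fin n) ℝ) (D : Matrix (Fin s) (Fin p) ℝ)
    (Ad : Matrix (Fin n) (Fin m) ℝ) (hA : IsMoorePenrose A Ad)
    (Dd : Matrix (Fin p) (Fin s) ℝ) (hD : IsMoorePenrose D Dd)
    (hB : LinearMap.range (Matrix.mulVecLin (B)) ≤ LinearMap.range (Matrix.mulVecLin (A)))
    (hCt : LinearMap.range (Matrix.mulVecLin (Cᵀ)) ≤ LinearMap.range (Matrix.mulVecLin (Aᵀ)))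
    (hC : LinearMap.range (Matrix.mulVecLin (C)) ≤ LinearMap.range (Matrix.mulVecLin (D)))
    (hBt : LinearMap.range (Matrix.mulVecLin (Bᵀ)) ≤ LinearMap.range (Matrix.mulVecLin (Dᵀ)))
 :
    IsMoorePenrose (Matrix.fromBlocks Ad (-(Ad * B)) (C * Ad) (D - C * Ad * B))
      (Matrix.fromBlocks (A - B * Dd * C) (B * Dd) (-(Dd * C)) Dd) := by
  obtain ⟨hA1, hA2, hA3, hA4⟩ := hA
  obtain ⟨hD1, hD2, hD3, hD4⟩ := hD
  have hA1' : A * (Ad * A) = A := by rw [← Matrix.mul_assoc]; exact hA1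
  have hD1' : D * (Dd * D) = D := by rw [← Matrix.mul_assoc]; exact hD1
  -- key identities
  have e1 : A * Ad * B = B := by
    obtain ⟨X, hX⟩ := factor_aux hB
    rw [← hX, ← Matrix.mul_assoc, hA1]
  have e2 : C * (Ad * A) = C := by
    obtain ⟨Y, hY⟩ := factor_aux hCt
    have hC' : Yᵀ * A = C := by
      have := congrArg Matrix.transpose hY
      simpa [Matrix.transpose_mul] using this
    rw [← hC', Matrix.mul_assoc, hA1']
  have e3 : D * Dd * C = C := by
    obtain ⟨Z, hZ⟩ := factor_aux hC
    rw [← hZ, ← Matrix.mul_assoc, hD1]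
  have e4 : B * (Dd * D) = B := by
    obtain ⟨W, hW⟩ := factor_aux hBt
    have hB' : Wᵀ * D = B := by
      have := congrArg Matrix.transpose hW
      simpa [Matrix.transpose_mul] using this
    rw [← hB', Matrix.mul_assoc, hD1']
  -- right-associated derived identities
  have f1 : Ad * (A * (Ad * B)) = Ad * B := by
    rw [← Matrix.mul_assoc, ← Matrix.mul_assoc, hA2]
  have f2 : D * (Dd * (C * Ad)) = C * Ad := by
    rw [← Matrix.mul_assoc, ← Matrix.mul_assoc, e3]
  have f3 : D * (Dd * (C * (Ad * B))) = C * (Ad * B) := by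
    rw [← Matrix.mul_assoc, ← Matrix.mul_assoc, e3]
  have g1 : A * (Ad * (B * (Dd * C))) = B * (Dd * C) := by
    rw [← Matrix.mul_assoc, ← Matrix.mul_assoc, e1]
  have g2 : A * (Ad * (B * Dd)) = B * Dd := by
    rw [← Matrix.mul_assoc, ← Matrix.mul_assoc, e1]
  have g3 : Dd * (D * (Dd * C)) = Dd * C := by
    rw [← Matrix.mul_assoc, ← Matrix.mul_assoc, hD2]
  have hD2' : Dd * (D * Dd) = Dd := by rw [← Matrix.mul_assoc]; exact hD2
  have hA2' : Ad * (A * Ad) = Ad := by rw [← Matrix.mul_assoc]; exact hA2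
  have e3' : D * (Dd * C) = C := by rw [← Matrix.mul_assoc]; exact e3
  have e1' : A * (Ad * B) = B := by rw [← Matrix.mul_assoc]; exact e1
  have hHJ : (Matrix.fromBlocks Ad (-(Ad * B)) (C * Ad) (D - C * Ad * B)) *
      (Matrix.fromBlocks (A - B * Dd * C) (B * Dd) (-(Dd * C)) Dd) =
      Matrix.fromBlocks (Ad * A) 0 0 (D * Dd) := by
    rw [Matrix.fromBlocks_multiply, Matrix.fromBlocks_inj]
    refine ⟨?_, ?_, ?_, ?_⟩ <;>
    · simp only [Matrix.mul_sub, Matrix.sub_mul, Matrix.mul_neg, Matrix.neg_mul, neg_neg,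
        Matrix.mul_assoc, e2, hD1', f2, f3, e3']
      all_goals abel
  have hJH : (Matrix.fromBlocks (A - B * Dd * C) (B * Dd) (-(Dd * C)) Dd) *
      (Matrix.fromBlocks Ad (-(Ad * B)) (C * Ad) (D - C * Ad * B)) =
      Matrix.fromBlocks (A * Ad) 0 0 (Dd * D) := by
    rw [Matrix.fromBlocks_multiply, Matrix.fromBlocks_inj]
    refine ⟨?_, ?_, ?_, ?_⟩ <;>
    · simp only [Matrix.mul_sub, Matrix.sub_mul, Matrix.mul_neg, Matrix.neg_mul, neg_neg,
        Matrix.mul_assoc, f1, e4, e1']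
      all_goals abel
  refine ⟨?_, ?_, ?_, ?_⟩
  · rw [hHJ, Matrix.fromBlocks_multiply, Matrix.fromBlocks_inj]
    refine ⟨?_, ?_, ?_, ?_⟩ <;>
    · simp only [Matrix.zero_mul, Matrix.mul_zero, add_zero, zero_add, Matrix.mul_neg,
        Matrix.neg_mul, Matrix.mul_sub, Matrix.sub_mul, Matrix.mul_assoc,
        hA2', f1, f2, f3, hD1']
      all_goals abel
  · rw [show (Matrix.fromBlocks (A - B * Dd * C) (B * Dd) (-(Dd * C)) Dd) *
        (Matrix.fromBlocks Ad (-(Ad * B)) (C * Ad) (D - C * Ad * B)) *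
        (Matrix.fromBlocks (A - B * Dd * C) (B * Dd) (-(Dd * C)) Dd)
      = (Matrix.fromBlocks (A * Ad) 0 0 (Dd * D)) *
        (Matrix.fromBlocks (A - B * Dd * C) (B * Dd) (-(Dd * C)) Dd) from by rw [hJH],
      Matrix.fromBlocks_multiply, Matrix.fromBlocks_inj]
    refine ⟨?_, ?_, ?_, ?_⟩ <;>
    · simp only [Matrix.zero_mul, Matrix.mul_zero, add_zero, zero_add, Matrix.mul_neg,
        Matrix.neg_mul, Matrix.mul_sub, Matrix.sub_mul, Matrix.mul_assoc,
        hA1', g1, g2, g3, hD2']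
      all_goals abel
  · rw [hHJ, Matrix.fromBlocks_transpose]
    simp [hA4, hD3]
  · rw [hJH, Matrix.fromBlocks_transpose]
    simp [hA3, hD4]
end

section
/- Under the hypotheses R(B) ⊆ R(A), R(Cᵀ) ⊆ R(Aᵀ), R(C) ⊆ R(D), R(Bᵀ) ⊆ R(Dᵀ), the product JH equals the block diagonal matrix [[AA†, 0],[0, D†D]], where H = [[A†, -A†B],[CA†, F]], J = [[G, BD†],[-D†C, D†]], F = D - CA†B, G = A - BD†C. -/
open Matrix LinearMap

lemma key_mp {a b c : ℕ} (M : Matrix (Fin a) (Fin b) ℝ) (X : Matrix (Fin b) (Fin a) ℝ)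
    (N : Matrix (Fin a) (Fin c) ℝ) (hM : M * X * M = M)
    (h : LinearMap.range (Matrix.mulVecLin N) ≤ LinearMap.range (Matrix.mulVecLin M)) :
    M * X * N = N := by
  have h2 : ∀ v, (M * X * N) *ᵥ v = N *ᵥ v := by
    intro v
    obtain ⟨w, hw⟩ := h ⟨v, rfl⟩
    simp only [mulVecLin_apply] at hw
    rw [← Matrix.mulVec_mulVec, ← Matrix.mulVec_mulVec, ← hw, Matrix.mulVec_mulVec,
      Matrix.mulVec_mulVec, hM]
  ext i j
  simpa [Matrix.mulVec_single] using congrFun (h2 (Pi.single j 1)) i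

theorem stmt3
    {m n s p : ℕ}
    (A : Matrix (Fin m) (Fin n) ℝ) (B : Matrix (Fin m) (Fin p) ℝ)
    (C : Matrix (Fin s) (Fin n) ℝ) (D : Matrix (Fin s) (Fin p) ℝ)
    (Ad : Matrix (Fin n) (Fin m) ℝ) (hA : IsMoorePenrose A Ad)
    (Dd : Matrix (Fin p) (Fin s) ℝ) (hD : IsMoorePenrose D Dd)
    (hB : LinearMap.range (Matrix.mulVecLin (B)) ≤ LinearMap.range (Matrix.mulVecLin (A)))
    (hCt : LinearMap.range (Matrix.mulVecLin (Cᵀ)) ≤ LinearMap.range (Matrix.mulVecLin (Aᵀ)))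
    (hC : LinearMap.range (Matrix.mulVecLin (C)) ≤ LinearMap.range (Matrix.mulVecLin (D)))
    (hBt : LinearMap.range (Matrix.mulVecLin (Bᵀ)) ≤ LinearMap.range (Matrix.mulVecLin (Dᵀ)))
 :
    Matrix.fromBlocks (A - B * Dd * C) (B * Dd) (-(Dd * C)) Dd *
      Matrix.fromBlocks Ad (-(Ad * B)) (C * Ad) (D - C * Ad * B)
    = Matrix.fromBlocks (A * Ad) 0 0 (Dd * D) := by
  have hAt : Aᵀ * Adᵀ * Aᵀ = Aᵀ := by
    have := congrArg Matrix.transpose hA.1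
    simpa [Matrix.transpose_mul, Matrix.mul_assoc] using this
  have hDt : Dᵀ * Ddᵀ * Dᵀ = Dᵀ := by
    have := congrArg Matrix.transpose hD.1
    simpa [Matrix.transpose_mul, Matrix.mul_assoc] using this
  have hAB : A * Ad * B = B := key_mp A Ad B hA.1 hB
  have hDC : D * Dd * C = C := key_mp D Dd C hD.1 hC
  have hCA : C * Ad * A = C := by
    have := congrArg Matrix.transpose (key_mp Aᵀ Adᵀ Cᵀ hAt hCt)
    simpa [Matrix.transpose_mul, Matrix.mul_assoc] using this
  have hBD : B * Dd * D = B := by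
    have := congrArg Matrix.transpose (key_mp Dᵀ Ddᵀ Bᵀ hDt hBt)
    simpa [Matrix.transpose_mul, Matrix.mul_assoc] using this
  have e1 : A * (Ad * B) = B := by rw [← Matrix.mul_assoc, hAB]
  have e2 : B * (Dd * D) = B := by rw [← Matrix.mul_assoc, hBD]
  rw [Matrix.fromBlocks_multiply]
  have g11 : (A - B * Dd * C) * Ad + B * Dd * (C * Ad) = A * Ad := by
    simp only [Matrix.sub_mul, Matrix.mul_assoc]
    abel
  have g12 : (A - B * Dd * C) * -(Ad * B) + (B * Dd) * (D - C * Ad * B) = 0 := by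
    simp only [Matrix.sub_mul, Matrix.mul_sub, Matrix.mul_neg, Matrix.neg_mul,
      Matrix.mul_assoc, e1, e2]
    abel
  have g21 : -(Dd * C) * Ad + Dd * (C * Ad) = 0 := by
    simp only [Matrix.neg_mul, Matrix.mul_assoc]
    abel
  have g22 : -(Dd * C) * -(Ad * B) + Dd * (D - C * Ad * B) = Dd * D := by
    simp only [Matrix.neg_mul, Matrix.mul_neg, Matrix.mul_sub, Matrix.mul_assoc, neg_neg]
    abel
  rw [g11, g12, g21, g22]
end

section
/- Under the hypotheses R(B) ⊆ R(A), R(Cᵀ) ⊆ R(Aᵀ), R(C) ⊆ R(D), R(Bᵀ) ⊆ R(Dᵀ), the product HJ equals the block diagonal matrix [[A†A, 0],[0, DD†]], where H = [[A†, -A†B],[CA†, F]], J = [[G, BD†],[-D†C, D†]], F = D - CA†B, G = A - BD†C. -/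
open Matrix LinearMap

lemma proj_fix {a b c : ℕ} (N : Matrix (Fin a) (Fin b) ℝ) (Nd : Matrix (Fin b) (Fin a) ℝ)
    (hN : N * Nd * N = N) (M : Matrix (Fin a) (Fin c) ℝ)
    (h : LinearMap.range (Matrix.mulVecLin M) ≤ LinearMap.range (Matrix.mulVecLin N)) :
    N * Nd * M = M := by
  ext i j
  obtain ⟨x, hx⟩ := h (⟨Pi.single j 1, rfl⟩ : M *ᵥ Pi.single j 1 ∈ LinearMap.range (Matrix.mulVecLin M))
  simp only [Matrix.mulVecLin_apply] at hx
  have key : (N * Nd * M) *ᵥ Pi.single j 1 = M *ᵥ Pi.single j 1 := by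
    rw [← Matrix.mulVec_mulVec, ← hx, Matrix.mulVec_mulVec, hN]
  have h1 := congrFun key i
  simpa [Matrix.mulVec_single] using h1

theorem stmt4
    {m n s p : ℕ}
    (A : Matrix (Fin m) (Fin n) ℝ) (B : Matrix (Fin m) (Fin p) ℝ)
    (C : Matrix (Fin s) (Fin n) ℝ) (D : Matrix (Fin s) (Fin p) ℝ)
    (Ad : Matrix (Fin n) (Fin m) ℝ) (hA : IsMoorePenrose A Ad)
    (Dd : Matrix (Fin p) (Fin s) ℝ) (hD : IsMoorePenrose D Dd)
    (hB : LinearMap.range (Matrix.mulVecLin (B)) ≤ LinearMap.range (Matrix.mulVecLin (A)))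
    (hCt : LinearMap.range (Matrix.mulVecLin (Cᵀ)) ≤ LinearMap.range (Matrix.mulVecLin (Aᵀ)))
    (hC : LinearMap.range (Matrix.mulVecLin (C)) ≤ LinearMap.range (Matrix.mulVecLin (D)))
    (hBt : LinearMap.range (Matrix.mulVecLin (Bᵀ)) ≤ LinearMap.range (Matrix.mulVecLin (Dᵀ)))
 :
    Matrix.fromBlocks Ad (-(Ad * B)) (C * Ad) (D - C * Ad * B) *
      Matrix.fromBlocks (A - B * Dd * C) (B * Dd) (-(Dd * C)) Dd
    = Matrix.fromBlocks (Ad * A) 0 0 (D * Dd) := by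
  have hAt : Aᵀ * Adᵀ * Aᵀ = Aᵀ := by
    rw [← Matrix.transpose_mul, ← Matrix.transpose_mul, ← Matrix.mul_assoc, hA.1]
  have hCAA : C * Ad * A = C := by
    have h2 := congrArg Matrix.transpose (proj_fix Aᵀ Adᵀ hAt Cᵀ hCt)
    simpa [Matrix.transpose_mul, Matrix.mul_assoc] using h2
  have hDDC : D * Dd * C = C := proj_fix D Dd hD.1 C hC
  have hCAA' : C * (Ad * A) = C := by rw [← Matrix.mul_assoc]; exact hCAA
  have hDDC' : D * (Dd * C) = C := by rw [← Matrix.mul_assoc]; exact hDDC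
  have t1 : Ad * (A - B * Dd * C) + -(Ad * B) * -(Dd * C) = Ad * A := by
    simp [Matrix.mul_sub, Matrix.mul_assoc]
  have t2 : Ad * (B * Dd) + -(Ad * B) * Dd = 0 := by
    simp [Matrix.mul_assoc]
  have t3 : C * Ad * (A - B * Dd * C) + (D - C * Ad * B) * -(Dd * C) = 0 := by
    simp [Matrix.mul_sub, Matrix.sub_mul, Matrix.mul_assoc]
    rw [hCAA', hDDC', sub_self]
  have t4 : C * Ad * (B * Dd) + (D - C * Ad * B) * Dd = D * Dd := by
    simp [Matrix.sub_mul, Matrix.mul_assoc]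
  rw [Matrix.fromBlocks_multiply, t1, t2, t3, t4]
end

section
/- Suppose R(Cᵀ) ⊆ R(Aᵀ), R(B) ⊆ R(A), R(CA†) ⊆ R(F), and R((A†B)ᵀ) ⊆ R(Fᵀ), where F = D - CA†B. Then the Moore-Penrose inverse of the block matrix M = [[A,B],[C,D]] is [[A† + A†BF†CA†, -A†BF†],[-F†CA†, F†]]. -/
open Matrix LinearMap

lemma key_fac {a b c : ℕ} (Y : Matrix (Fin a) (Fin b) ℝ) (Yd : Matrix (Fin b) (Fin a) ℝ)
    (X : Matrix (Fin a) (Fin c) ℝ) (hY : Y * Yd * Y = Y)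
    (h : LinearMap.range X.mulVecLin ≤ LinearMap.range Y.mulVecLin) :
    Y * Yd * X = X := by
  ext i j
  obtain ⟨w, hw⟩ := h ⟨Pi.single j (1:ℝ), rfl⟩
  simp only [mulVecLin_apply] at hw
  have : (Y * Yd * X) *ᵥ Pi.single j (1:ℝ) = X *ᵥ Pi.single j (1:ℝ) := by
    rw [← Matrix.mulVec_mulVec, ← hw, Matrix.mulVec_mulVec, hY]
  have := congrFun this i
  simpa using this

lemma massoc3 {a b c d e : ℕ} {X : Matrix (Fin a) (Fin b) ℝ} {Y : Matrix (Fin b) (Fin c) ℝ}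
    {Z : Matrix (Fin c) (Fin d) ℝ} {W : Matrix (Fin a) (Fin d) ℝ} (h : X * Y * Z = W)
    (V : Matrix (Fin d) (Fin e) ℝ) : X * (Y * (Z * V)) = W * V := by
  rw [← h, Matrix.mul_assoc, Matrix.mul_assoc]

lemma massoc2 {a b c e : ℕ} {X : Matrix (Fin a) (Fin b) ℝ} {Y : Matrix (Fin b) (Fin c) ℝ}
    {W : Matrix (Fin a) (Fin c) ℝ} (h : X * Y = W)
    (V : Matrix (Fin c) (Fin e) ℝ) : X * (Y * V) = W * V := by
  rw [← h, Matrix.mul_assoc]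

theorem stmt5
    {m n s p : ℕ}
    (A : Matrix (Fin m) (Fin n) ℝ) (B : Matrix (Fin m) (Fin p) ℝ)
    (C : Matrix (Fin s) (Fin n) ℝ) (D : Matrix (Fin s) (Fin p) ℝ)
    (Ad : Matrix (Fin n) (Fin m) ℝ) (hA : IsMoorePenrose A Ad)
    (Fd : Matrix (Fin p) (Fin s) ℝ) (hF : IsMoorePenrose (D - C * Ad * B) Fd)
    (hCt : LinearMap.range (Matrix.mulVecLin (Cᵀ)) ≤ LinearMap.range (Matrix.mulVecLin (Aᵀ)))
    (hB : LinearMap.range (Matrix.mulVecLin (B)) ≤ LinearMap.range (Matrix.mulVecLin (A)))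
    (hCA : LinearMap.range (Matrix.mulVecLin (C * Ad)) ≤ LinearMap.range (Matrix.mulVecLin (D - C * Ad * B)))
    (hAB : LinearMap.range (Matrix.mulVecLin ((Ad * B)ᵀ)) ≤ LinearMap.range (Matrix.mulVecLin ((D - C * Ad * B)ᵀ))) :
    IsMoorePenrose (Matrix.fromBlocks A B C D)
      (Matrix.fromBlocks (Ad + Ad * B * Fd * C * Ad) (-(Ad * B * Fd)) (-(Fd * C * Ad)) Fd) := by
  obtain ⟨hA1, hA2, hA3, hA4⟩ := hA
  obtain ⟨hF1, hF2, hF3, hF4⟩ := hF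
  -- derived equations
  have e1 : A * Ad * B = B := key_fac A Ad B hA1 hB
  have e2 : C * Ad * A = C := by
    have hT : Aᵀ * Adᵀ * Aᵀ = Aᵀ := by
      rw [← Matrix.transpose_mul, ← Matrix.transpose_mul, ← Matrix.mul_assoc, hA1]
    have h := key_fac Aᵀ Adᵀ Cᵀ hT hCt
    have h2 := congrArg Matrix.transpose h
    rw [Matrix.mul_assoc]
    simpa [Matrix.transpose_mul, Matrix.mul_assoc] using h2
  have e3 : (D - C * Ad * B) * Fd * (C * Ad) = C * Ad :=
    key_fac (D - C * Ad * B) Fd (C * Ad) hF1 hCA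
  have e4 : Ad * B * Fd * (D - C * Ad * B) = Ad * B := by
    have hT : (D - C * Ad * B)ᵀ * Fdᵀ * (D - C * Ad * B)ᵀ = (D - C * Ad * B)ᵀ := by
      rw [← Matrix.transpose_mul, ← Matrix.transpose_mul, ← Matrix.mul_assoc, hF1]
    have h := key_fac (D - C * Ad * B)ᵀ Fdᵀ (Ad * B)ᵀ hT hAB
    have h2 := congrArg Matrix.transpose h
    rw [Matrix.mul_assoc]
    simpa [Matrix.transpose_mul, Matrix.mul_assoc] using h2
  -- right-assoc / generalized forms
  have f2 : ∀ {q : ℕ} (V : Matrix (Fin p) (Fin q) ℝ), A * (Ad * (B * V)) = B * V :=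
    fun V => massoc3 e1 V
  have f2' : A * (Ad * B) = B := by rw [← Matrix.mul_assoc, e1]
  have f3 : C * (Ad * A) = C := by rw [← Matrix.mul_assoc, e2]
  have f1 : A * (Ad * A) = A := by rw [← Matrix.mul_assoc, hA1]
  have f6 : Ad * (A * Ad) = Ad := by rw [← Matrix.mul_assoc, hA2]
  have g6 : ∀ {q : ℕ} (V : Matrix (Fin m) (Fin q) ℝ), Ad * (A * (Ad * V)) = Ad * V :=
    fun V => massoc3 hA2 V
  have g7 : ∀ {q : ℕ} (V : Matrix (Fin s) (Fin q) ℝ), Fd * ((D - C * Ad * B) * (Fd * V)) = Fd * V :=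
    fun V => massoc3 hF2 V
  have f7 : Fd * ((D - C * Ad * B) * Fd) = Fd := by rw [← Matrix.mul_assoc, hF2]
  have g4 : ∀ {q : ℕ} (V : Matrix (Fin m) (Fin q) ℝ), (D - C * Ad * B) * (Fd * ((C * Ad) * V)) = (C * Ad) * V :=
    fun V => massoc3 e3 V
  -- expanded auxiliary identities (right-assoc)
  have e3x : D * (Fd * (C * Ad)) = C * Ad + C * (Ad * (B * (Fd * (C * Ad)))) := by
    have := e3
    simp only [Matrix.sub_mul, Matrix.mul_assoc] at this
    linear_combination (norm := abel) this
  have e4x : Ad * (B * (Fd * D)) = Ad * B + Ad * (B * (Fd * (C * (Ad * B)))) := by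
    have := e4
    simp only [Matrix.mul_sub, Matrix.mul_assoc] at this
    linear_combination (norm := abel) this
  have e5 : (D - C * Ad * B) * Fd * C = C := by
    calc (D - C * Ad * B) * Fd * C = (D - C * Ad * B) * Fd * (C * (Ad * A)) := by rw [f3]
      _ = (D - C * Ad * B) * Fd * (C * Ad) * A := by simp only [Matrix.mul_assoc]
      _ = C * Ad * A := by rw [e3]
      _ = C := e2
  have e6 : (D - C * Ad * B) * Fd * D = D := by
    have hD : D = (D - C * Ad * B) + C * Ad * B := by abel
    calc (D - C * Ad * B) * Fd * D
        = (D - C * Ad * B) * Fd * ((D - C * Ad * B) + C * Ad * B) := by rw [← hD]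
      _ = (D - C * Ad * B) * Fd * (D - C * Ad * B) + (D - C * Ad * B) * Fd * (C * Ad) * B := by
          rw [Matrix.mul_add]; simp only [Matrix.mul_assoc]
      _ = (D - C * Ad * B) + C * Ad * B := by rw [hF1, e3]
      _ = D := by abel
  -- key products
  have hMN : Matrix.fromBlocks A B C D *
      Matrix.fromBlocks (Ad + Ad * B * Fd * C * Ad) (-(Ad * B * Fd)) (-(Fd * C * Ad)) Fd
      = Matrix.fromBlocks (A * Ad) 0 0 ((D - C * Ad * B) * Fd) := by
    rw [Matrix.fromBlocks_multiply, Matrix.fromBlocks_inj]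
    refine ⟨?_, ?_, ?_, ?_⟩
    · simp only [Matrix.mul_add, Matrix.add_mul, Matrix.mul_sub, Matrix.sub_mul, Matrix.mul_neg, Matrix.neg_mul, Matrix.mul_assoc, f2]
      abel
    · simp only [Matrix.mul_add, Matrix.add_mul, Matrix.mul_sub, Matrix.sub_mul, Matrix.mul_neg, Matrix.neg_mul, Matrix.mul_assoc, f2, f2']
      abel
    · simp only [Matrix.mul_add, Matrix.add_mul, Matrix.mul_sub, Matrix.sub_mul, Matrix.mul_neg, Matrix.neg_mul, Matrix.mul_assoc, e3x]
      abel
    · simp only [Matrix.mul_add, Matrix.add_mul, Matrix.mul_sub, Matrix.sub_mul, Matrix.mul_neg, Matrix.neg_mul, Matrix.mul_assoc]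
      abel
  have hNM : Matrix.fromBlocks (Ad + Ad * B * Fd * C * Ad) (-(Ad * B * Fd)) (-(Fd * C * Ad)) Fd *
      Matrix.fromBlocks A B C D
      = Matrix.fromBlocks (Ad * A) 0 0 (Fd * (D - C * Ad * B)) := by
    rw [Matrix.fromBlocks_multiply, Matrix.fromBlocks_inj]
    refine ⟨?_, ?_, ?_, ?_⟩
    · simp only [Matrix.mul_add, Matrix.add_mul, Matrix.mul_sub, Matrix.sub_mul, Matrix.mul_neg, Matrix.neg_mul, Matrix.mul_assoc, f3]
      abel
    · simp only [Matrix.mul_add, Matrix.add_mul, Matrix.mul_sub, Matrix.sub_mul, Matrix.mul_neg, Matrix.neg_mul, Matrix.mul_assoc, e4x]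
      abel
    · simp only [Matrix.mul_add, Matrix.add_mul, Matrix.mul_sub, Matrix.sub_mul, Matrix.mul_neg, Matrix.neg_mul, Matrix.mul_assoc, f3]
      abel
    · simp only [Matrix.mul_add, Matrix.add_mul, Matrix.mul_sub, Matrix.sub_mul, Matrix.mul_neg, Matrix.neg_mul, Matrix.mul_assoc]
      abel
  refine ⟨?_, ?_, ?_, ?_⟩
  · rw [hMN, Matrix.fromBlocks_multiply]
    simp only [Matrix.zero_mul, add_zero, zero_add]
    rw [Matrix.fromBlocks_inj]
    exact ⟨hA1, e1, e5, e6⟩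
  · rw [hNM, Matrix.fromBlocks_multiply]
    simp only [Matrix.zero_mul, Matrix.mul_zero, add_zero, zero_add]
    rw [Matrix.fromBlocks_inj]
    refine ⟨?_, ?_, ?_, ?_⟩
    · simp only [Matrix.mul_add, Matrix.add_mul, Matrix.mul_sub, Matrix.sub_mul, Matrix.mul_neg, Matrix.neg_mul, Matrix.mul_assoc, f6, g6]
    · simp only [Matrix.mul_add, Matrix.add_mul, Matrix.mul_sub, Matrix.sub_mul, Matrix.mul_neg, Matrix.neg_mul, Matrix.mul_assoc, g6]
    · simp only [Matrix.mul_add, Matrix.add_mul, Matrix.mul_sub, Matrix.sub_mul, Matrix.mul_neg,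
        Matrix.neg_mul, Matrix.mul_assoc, e3x]
      abel
    · have f7' : Fd * ((D - C * (Ad * B)) * Fd) = Fd := by
        rw [show D - C * (Ad * B) = D - C * Ad * B by rw [Matrix.mul_assoc], ← Matrix.mul_assoc, hF2]
      simp only [Matrix.mul_assoc, f7']
  · rw [hMN, Matrix.fromBlocks_transpose]
    simp [hA3, hF3]
  · rw [hNM, Matrix.fromBlocks_transpose]
    simp [hA4, hF4]
end

section
/- Suppose R(Bᵀ) ⊆ R(Dᵀ), R(C) ⊆ R(D), R(BD†) ⊆ R(G), and R((D†C)ᵀ) ⊆ R(Gᵀ), where G = A - BD†C. Then the Moore-Penrose inverse of M = [[A,B],[C,D]] is [[G†, -G†BD†],[-D†CG†, D† + D†CG†BD†]]. -/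
open Matrix LinearMap

/-- If the range of `X` is contained in the range of `Y` and `Y * Yd * Y = Y`, then
`Y * Yd * X = X`. -/
lemma range_factor {α β γ : Type*} [Fintype α] [Fintype β] [Fintype γ]
    [DecidableEq α] [DecidableEq β] [DecidableEq γ]
    (X : Matrix α γ ℝ) (Y : Matrix α β ℝ) (Yd : Matrix β α ℝ)
    (hY : Y * Yd * Y = Y)
    (h : LinearMap.range X.mulVecLin ≤ LinearMap.range Y.mulVecLin) :
    Y * Yd * X = X := by
  ext i j
  obtain ⟨u, hu⟩ : X *ᵥ Pi.single j 1 ∈ LinearMap.range Y.mulVecLin :=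
    h ⟨Pi.single j 1, rfl⟩
  have key : (Y * Yd * X) *ᵥ Pi.single j 1 = X *ᵥ Pi.single j 1 := by
    rw [← Matrix.mulVec_mulVec, ← hu]
    show (Y * Yd) *ᵥ (Y.mulVecLin u) = Y.mulVecLin u
    simp only [Matrix.mulVecLin_apply, Matrix.mulVec_mulVec, hY]
  have h2 := congrFun key i
  simpa using h2

theorem stmt6
    {m n s p : ℕ}
    (A : Matrix (Fin m) (Fin n) ℝ) (B : Matrix (Fin m) (Fin p) ℝ)
    (C : Matrix (Fin s) (Fin n) ℝ) (D : Matrix (Fin s) (Fin p) ℝ)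
    (Dd : Matrix (Fin p) (Fin s) ℝ) (hD : IsMoorePenrose D Dd)
    (Gd : Matrix (Fin n) (Fin m) ℝ) (hG : IsMoorePenrose (A - B * Dd * C) Gd)
    (hBt : LinearMap.range (Matrix.mulVecLin (Bᵀ)) ≤ LinearMap.range (Matrix.mulVecLin (Dᵀ)))
    (hC : LinearMap.range (Matrix.mulVecLin (C)) ≤ LinearMap.range (Matrix.mulVecLin (D)))
    (hBD : LinearMap.range (Matrix.mulVecLin (B * Dd)) ≤ LinearMap.range (Matrix.mulVecLin (A - B * Dd * C)))
    (hDC : LinearMap.range (Matrix.mulVecLin ((Dd * C)ᵀ)) ≤ LinearMap.range (Matrix.mulVecLin ((A - B * Dd * C)ᵀ))) :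
    IsMoorePenrose (Matrix.fromBlocks A B C D)
      (Matrix.fromBlocks Gd (-(Gd * B * Dd)) (-(Dd * C * Gd)) (Dd + Dd * C * Gd * B * Dd)) := by
  obtain ⟨hD1, hD2, hD3, hD4⟩ := hD
  obtain ⟨hG1, hG2, hG3, hG4⟩ := hG
  -- key identities from the range conditions
  have key1 : D * Dd * C = C := range_factor C D Dd hD1 hC
  have key2 : B * Dd * D = B := by
    have hYt : Dᵀ * Ddᵀ * Dᵀ = Dᵀ := by
      rw [← Matrix.transpose_mul, ← Matrix.transpose_mul]
      exact congrArg Matrix.transpose (by rw [← Matrix.mul_assoc]; exact hD1)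
    have h0 := range_factor Bᵀ Dᵀ Ddᵀ hYt hBt
    have h2 := congrArg Matrix.transpose h0
    simpa [Matrix.transpose_mul, Matrix.mul_assoc] using h2
  have key3 : (A - B * Dd * C) * Gd * (B * Dd) = B * Dd :=
    range_factor (B * Dd) (A - B * Dd * C) Gd hG1 hBD
  have key4 : Dd * C * (Gd * (A - B * Dd * C)) = Dd * C := by
    have hYt : (A - B * Dd * C)ᵀ * Gdᵀ * (A - B * Dd * C)ᵀ = (A - B * Dd * C)ᵀ := by
      rw [← Matrix.transpose_mul, ← Matrix.transpose_mul]
      exact congrArg Matrix.transpose (by rw [← Matrix.mul_assoc]; exact hG1)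
    have h0 := range_factor (Dd * C)ᵀ (A - B * Dd * C)ᵀ Gdᵀ hYt hDC
    have h2 := congrArg Matrix.transpose h0
    simpa [Matrix.transpose_mul, Matrix.mul_assoc] using h2
  -- introduce an opaque G
  obtain ⟨G, hGdef⟩ : ∃ G', G' = A - B * Dd * C := ⟨_, rfl⟩
  rw [← hGdef] at hG1 hG2 hG3 hG4 key3 key4
  have hA : A = G + B * Dd * C := by rw [hGdef]; abel
  -- re-associate key identities
  have k2' : B * (Dd * D) = B := by rw [← Matrix.mul_assoc]; exact key2
  have k3 : G * (Gd * (B * Dd)) = B * Dd := by rw [← Matrix.mul_assoc]; exact key3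
  have k4' : Dd * (C * (Gd * G)) = Dd * C := by
    rw [← Matrix.mul_assoc]; exact key4
  have k1a : D * (Dd * (C * Gd)) = C * Gd := by
    simp only [← Matrix.mul_assoc]; rw [key1]
  have k1b : D * (Dd * (C * (Gd * (B * Dd)))) = C * (Gd * (B * Dd)) := by
    simp only [← Matrix.mul_assoc]
    rw [key1]
  have kG : G * (Gd * G) = G := by rw [← Matrix.mul_assoc]; exact hG1
  have kG2 : Gd * (G * Gd) = Gd := by rw [← Matrix.mul_assoc]; exact hG2
  have kD2 : Dd * (D * Dd) = Dd := by rw [← Matrix.mul_assoc]; exact hD2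
  have k3b : G * (Gd * (B * (Dd * C))) = B * (Dd * C) := by
    simp only [← Matrix.mul_assoc]
    rw [Matrix.mul_assoc (G * Gd) B Dd, key3]
  have kGB : G * (Gd * B) = B := by
    have e : G * (Gd * B) = G * (Gd * (B * (Dd * D))) := by rw [k2']
    rw [e]
    simp only [← Matrix.mul_assoc]
    rw [Matrix.mul_assoc (G * Gd) B Dd, key3]
    exact key2
  set M := Matrix.fromBlocks A B C D with hM
  set X := Matrix.fromBlocks Gd (-(Gd * B * Dd)) (-(Dd * C * Gd)) (Dd + Dd * C * Gd * B * Dd)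
    with hX
  have hMX : M * X = Matrix.fromBlocks (G * Gd) 0 0 (D * Dd) := by
    rw [hM, hX, Matrix.fromBlocks_multiply, Matrix.fromBlocks_inj]
    refine ⟨?_, ?_, ?_, ?_⟩
    · simp only [hA, Matrix.add_mul, Matrix.mul_add, Matrix.neg_mul, Matrix.mul_neg,
        Matrix.mul_assoc]
      abel
    · simp only [hA, Matrix.add_mul, Matrix.mul_add, Matrix.neg_mul, Matrix.mul_neg,
        Matrix.mul_assoc, k3]
      abel
    · simp only [Matrix.mul_neg, Matrix.mul_assoc, k1a]
      abel
    · simp only [Matrix.mul_add, Matrix.mul_neg, Matrix.mul_assoc, k1b]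
      abel
  have hXM : X * M = Matrix.fromBlocks (Gd * G) 0 0 (Dd * D) := by
    rw [hM, hX, Matrix.fromBlocks_multiply, Matrix.fromBlocks_inj]
    refine ⟨?_, ?_, ?_, ?_⟩
    · simp only [hA, Matrix.add_mul, Matrix.mul_add, Matrix.neg_mul, Matrix.mul_neg,
        Matrix.mul_assoc]
      abel
    · simp only [Matrix.neg_mul, Matrix.mul_assoc, k2']
      abel
    · simp only [hA, Matrix.add_mul, Matrix.mul_add, Matrix.neg_mul, Matrix.mul_neg,
        Matrix.mul_assoc, k4']
      abel
    · simp only [Matrix.add_mul, Matrix.neg_mul, Matrix.mul_assoc, k2']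
      abel
  refine ⟨?_, ?_, ?_, ?_⟩
  · rw [hMX, hM, Matrix.fromBlocks_multiply, Matrix.fromBlocks_inj]
    refine ⟨?_, ?_, ?_, ?_⟩
    · simp only [hA, Matrix.mul_add, Matrix.mul_assoc, kG, k3b, Matrix.zero_mul, add_zero]
    · simp only [Matrix.mul_assoc, kGB, Matrix.zero_mul, add_zero]
    · simp only [Matrix.zero_mul, zero_add, ← Matrix.mul_assoc]
      exact key1
    · simp only [Matrix.zero_mul, zero_add, ← Matrix.mul_assoc]
      exact hD1
  · rw [hXM, hX, Matrix.fromBlocks_multiply, Matrix.fromBlocks_inj]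
    refine ⟨?_, ?_, ?_, ?_⟩
    · simp only [Matrix.mul_assoc, kG2, Matrix.zero_mul, add_zero]
    · simp only [Matrix.mul_neg, Matrix.mul_assoc, k3, kG2, Matrix.zero_mul, add_zero]
    · simp only [Matrix.mul_neg, Matrix.mul_assoc, k1a, kD2, Matrix.zero_mul, zero_add, add_zero]
    · simp only [Matrix.mul_add, Matrix.mul_neg, Matrix.mul_assoc, k1b, kD2, Matrix.zero_mul,
        zero_add, add_zero, neg_zero]
  · rw [hMX, Matrix.fromBlocks_transpose]
    simp only [Matrix.transpose_zero, hG3, hD3]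
  · rw [hXM, Matrix.fromBlocks_transpose]
    simp only [Matrix.transpose_zero, hG4, hD4]
end

section
/- Suppose all eight inclusions hold: R(Cᵀ) ⊆ R(Aᵀ), R(B) ⊆ R(A), R((A†B)ᵀ) ⊆ R(Fᵀ), R(CA†) ⊆ R(F), R(C) ⊆ R(D), R(Bᵀ) ⊆ R(Dᵀ), R(BD†) ⊆ R(G), R((D†C)ᵀ) ⊆ R(Gᵀ), where F = D - CA†B and G = A - BD†C. Then G† = A† + A†BF†CA†. -/
open Matrix LinearMap

lemma range_le_factor {α β γ : Type*} [Fintype α] [Fintype β] [Fintype γ] [DecidableEq γ]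
    (A : Matrix α β ℝ) (M : Matrix α γ ℝ)
    (h : LinearMap.range M.mulVecLin ≤ LinearMap.range A.mulVecLin) :
    ∃ W : Matrix β γ ℝ, M = A * W := by
  choose w hw using fun j => h (LinearMap.mem_range_self M.mulVecLin (Pi.single j 1))
  refine ⟨Matrix.of fun k j => w j k, ?_⟩
  ext i j
  have := congrFun (hw j) i
  simp only [Matrix.mulVecLin_apply, Matrix.mulVec, dotProduct, Pi.single_apply,
    mul_ite, mul_one, mul_zero, Finset.sum_ite_eq', Finset.mem_univ, if_true] at this
  simp only [Matrix.mul_apply, Matrix.of_apply]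
  rw [← this]

lemma mp_unique {α β : Type*} [Fintype α] [Fintype β] [DecidableEq α] [DecidableEq β]
    (A : Matrix α β ℝ) (X Y : Matrix β α ℝ)
    (hX : IsMoorePenrose A X) (hY : IsMoorePenrose A Y) : X = Y := by
  obtain ⟨hX1, hX2, hX3, hX4⟩ := hX
  obtain ⟨hY1, hY2, hY3, hY4⟩ := hY
  have hAX : A * X = A * Y := by
    calc A * X = (A * X)ᵀ := hX3.symm
      _ = Xᵀ * Aᵀ := by rw [Matrix.transpose_mul]
      _ = Xᵀ * (A * Y * A)ᵀ := by rw [hY1]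
      _ = Xᵀ * (Aᵀ * (A * Y)ᵀ) := by rw [Matrix.transpose_mul]
      _ = Xᵀ * (Aᵀ * (A * Y)) := by rw [hY3]
      _ = (Xᵀ * Aᵀ) * (A * Y) := by rw [Matrix.mul_assoc]
      _ = (A * X)ᵀ * (A * Y) := by rw [Matrix.transpose_mul]
      _ = (A * X) * (A * Y) := by rw [hX3]
      _ = (A * X * A) * Y := by rw [Matrix.mul_assoc, Matrix.mul_assoc, Matrix.mul_assoc]
      _ = A * Y := by rw [hX1]
  have hXA : X * A = Y * A := by
    calc X * A = (X * A)ᵀ := hX4.symm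
      _ = Aᵀ * Xᵀ := by rw [Matrix.transpose_mul]
      _ = (A * (Y * A))ᵀ * Xᵀ := by rw [← Matrix.mul_assoc, hY1]
      _ = ((Y * A)ᵀ * Aᵀ) * Xᵀ := by rw [Matrix.transpose_mul]
      _ = ((Y * A) * Aᵀ) * Xᵀ := by rw [hY4]
      _ = (Y * A) * (Aᵀ * Xᵀ) := by rw [Matrix.mul_assoc]
      _ = (Y * A) * (X * A)ᵀ := by rw [Matrix.transpose_mul]
      _ = (Y * A) * (X * A) := by rw [hX4]
      _ = Y * (A * X * A) := by rw [Matrix.mul_assoc, Matrix.mul_assoc]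
      _ = Y * A := by rw [hX1]
  calc X = X * A * X := hX2.symm
    _ = Y * A * X := by rw [hXA]
    _ = Y * (A * X) := by rw [Matrix.mul_assoc]
    _ = Y * (A * Y) := by rw [hAX]
    _ = Y * A * Y := by rw [Matrix.mul_assoc]
    _ = Y := hY2

theorem stmt7
    {m n s p : ℕ}
    (A : Matrix (Fin m) (Fin n) ℝ) (B : Matrix (Fin m) (Fin p) ℝ)
    (C : Matrix (Fin s) (Fin n) ℝ) (D : Matrix (Fin s) (Fin p) ℝ)
    (Ad : Matrix (Fin n) (Fin m) ℝ) (hA : IsMoorePenrose A Ad)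
    (Dd : Matrix (Fin p) (Fin s) ℝ) (hD : IsMoorePenrose D Dd)
    (Fd : Matrix (Fin p) (Fin s) ℝ) (hF : IsMoorePenrose (D - C * Ad * B) Fd)
    (Gd : Matrix (Fin n) (Fin m) ℝ) (hG : IsMoorePenrose (A - B * Dd * C) Gd)
    (hCt : LinearMap.range (Matrix.mulVecLin (Cᵀ)) ≤ LinearMap.range (Matrix.mulVecLin (Aᵀ)))
    (hB : LinearMap.range (Matrix.mulVecLin (B)) ≤ LinearMap.range (Matrix.mulVecLin (A)))
    (hAB : LinearMap.range (Matrix.mulVecLin ((Ad * B)ᵀ)) ≤ LinearMap.range (Matrix.mulVecLin ((D - C * Ad * B)ᵀ)))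
    (hCA : LinearMap.range (Matrix.mulVecLin (C * Ad)) ≤ LinearMap.range (Matrix.mulVecLin (D - C * Ad * B)))
    (hC : LinearMap.range (Matrix.mulVecLin (C)) ≤ LinearMap.range (Matrix.mulVecLin (D)))
    (hBt : LinearMap.range (Matrix.mulVecLin (Bᵀ)) ≤ LinearMap.range (Matrix.mulVecLin (Dᵀ)))
    (hBD : LinearMap.range (Matrix.mulVecLin (B * Dd)) ≤ LinearMap.range (Matrix.mulVecLin (A - B * Dd * C)))
    (hDC : LinearMap.range (Matrix.mulVecLin ((Dd * C)ᵀ)) ≤ LinearMap.range (Matrix.mulVecLin ((A - B * Dd * C)ᵀ)))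
 :
    Gd = Ad + Ad * B * Fd * C * Ad := by
  set F : Matrix (Fin s) (Fin p) ℝ := D - C * Ad * B with hFdef
  -- derived equations from the range inclusions
  have e1 : A * Ad * B = B := by
    obtain ⟨W, hW⟩ := range_le_factor A B hB
    rw [hW, ← Matrix.mul_assoc, hA.1]
  have e2 : C * Ad * A = C := by
    obtain ⟨W, hW⟩ := range_le_factor Aᵀ Cᵀ hCt
    have : C = Wᵀ * A := by
      have := congrArg Matrix.transpose hW
      simpa [Matrix.transpose_mul] using this
    rw [this, Matrix.mul_assoc, Matrix.mul_assoc, ← Matrix.mul_assoc A Ad A, hA.1]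
  have e3 : Ad * B * Fd * F = Ad * B := by
    obtain ⟨W, hW⟩ := range_le_factor Fᵀ (Ad * B)ᵀ hAB
    have h1 : Ad * B = Wᵀ * F := by
      have := congrArg Matrix.transpose hW
      simpa [Matrix.transpose_mul] using this
    rw [h1, Matrix.mul_assoc, Matrix.mul_assoc, ← Matrix.mul_assoc F Fd F, hF.1]
  have e4 : F * Fd * (C * Ad) = C * Ad := by
    obtain ⟨W, hW⟩ := range_le_factor F (C * Ad) hCA
    rw [hW, ← Matrix.mul_assoc, hF.1]
  have e5 : D * Dd * C = C := by
    obtain ⟨W, hW⟩ := range_le_factor D C hC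
    rw [hW, ← Matrix.mul_assoc, hD.1]
  have e6 : B * Dd * D = B := by
    obtain ⟨W, hW⟩ := range_le_factor Dᵀ Bᵀ hBt
    have h1 : B = Wᵀ * D := by
      have := congrArg Matrix.transpose hW
      simpa [Matrix.transpose_mul] using this
    rw [h1, Matrix.mul_assoc, Matrix.mul_assoc, ← Matrix.mul_assoc D Dd D, hD.1]
  have cab : C * Ad * B = D - F := by rw [hFdef]; abel
  -- the candidate inverse
  have hGX : (A - B * Dd * C) * (Ad + Ad * B * Fd * C * Ad) = A * Ad := by
    have t2 : A * (Ad * B * Fd * C * Ad) = B * Fd * C * Ad := by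
      calc A * (Ad * B * Fd * C * Ad) = (A * Ad * B) * Fd * C * Ad := by
            simp only [Matrix.mul_assoc]
        _ = B * Fd * C * Ad := by rw [e1]
    have t4 : B * Dd * C * (Ad * B * Fd * C * Ad) = B * Fd * C * Ad - B * Dd * C * Ad := by
      calc B * Dd * C * (Ad * B * Fd * C * Ad)
          = B * Dd * ((C * Ad * B) * (Fd * (C * Ad))) := by simp only [Matrix.mul_assoc]
        _ = B * Dd * ((D - F) * (Fd * (C * Ad))) := by rw [cab]
        _ = B * Dd * (D * (Fd * (C * Ad))) - B * Dd * (F * (Fd * (C * Ad))) := by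
            rw [Matrix.sub_mul, Matrix.mul_sub]
        _ = (B * Dd * D) * (Fd * (C * Ad)) - B * Dd * (F * Fd * (C * Ad)) := by
            simp only [Matrix.mul_assoc]
        _ = B * (Fd * (C * Ad)) - B * Dd * (C * Ad) := by rw [e6, e4]
        _ = B * Fd * C * Ad - B * Dd * C * Ad := by simp only [Matrix.mul_assoc]
    calc (A - B * Dd * C) * (Ad + Ad * B * Fd * C * Ad)
        = A * Ad + A * (Ad * B * Fd * C * Ad)
          - (B * Dd * C * Ad + B * Dd * C * (Ad * B * Fd * C * Ad)) := by
          rw [Matrix.sub_mul, Matrix.mul_add, Matrix.mul_add]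
      _ = A * Ad + B * Fd * C * Ad
          - (B * Dd * C * Ad + (B * Fd * C * Ad - B * Dd * C * Ad)) := by rw [t2, t4]
      _ = A * Ad := by abel
  have hXG : (Ad + Ad * B * Fd * C * Ad) * (A - B * Dd * C) = Ad * A := by
    have u3 : (Ad * B * Fd * C * Ad) * A = Ad * B * Fd * C := by
      calc (Ad * B * Fd * C * Ad) * A = Ad * (B * (Fd * (C * Ad * A))) := by
            simp only [Matrix.mul_assoc]
        _ = Ad * (B * (Fd * C)) := by rw [e2]
        _ = Ad * B * Fd * C := by simp only [Matrix.mul_assoc]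
    have u4 : (Ad * B * Fd * C * Ad) * (B * Dd * C)
        = Ad * (B * (Fd * C)) - Ad * (B * (Dd * C)) := by
      calc (Ad * B * Fd * C * Ad) * (B * Dd * C)
          = Ad * (B * (Fd * ((C * Ad * B) * (Dd * C)))) := by simp only [Matrix.mul_assoc]
        _ = Ad * (B * (Fd * ((D - F) * (Dd * C)))) := by rw [cab]
        _ = Ad * (B * (Fd * (D * (Dd * C)))) - Ad * (B * (Fd * (F * (Dd * C)))) := by
            rw [Matrix.sub_mul, Matrix.mul_sub, Matrix.mul_sub, Matrix.mul_sub]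
        _ = Ad * (B * (Fd * (D * Dd * C))) - (Ad * B * Fd * F) * (Dd * C) := by
            simp only [Matrix.mul_assoc]
        _ = Ad * (B * (Fd * C)) - (Ad * B) * (Dd * C) := by rw [e5, e3]
        _ = Ad * (B * (Fd * C)) - Ad * (B * (Dd * C)) := by simp only [Matrix.mul_assoc]
    calc (Ad + Ad * B * Fd * C * Ad) * (A - B * Dd * C)
        = Ad * A + (Ad * B * Fd * C * Ad) * A
          - (Ad * (B * Dd * C) + (Ad * B * Fd * C * Ad) * (B * Dd * C)) := by
          rw [Matrix.add_mul, Matrix.mul_sub, Matrix.mul_sub]; abel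
      _ = Ad * A + Ad * B * Fd * C
          - (Ad * (B * Dd * C) + (Ad * (B * (Fd * C)) - Ad * (B * (Dd * C)))) := by
          rw [u3, u4]
      _ = Ad * A + Ad * B * Fd * C
          - (Ad * (B * (Dd * C)) + (Ad * (B * (Fd * C)) - Ad * (B * (Dd * C)))) := by
          simp only [Matrix.mul_assoc]
      _ = Ad * A + Ad * B * Fd * C - Ad * (B * (Fd * C)) := by abel
      _ = Ad * A := by simp only [Matrix.mul_assoc]; abel
  have hMP : IsMoorePenrose (A - B * Dd * C) (Ad + Ad * B * Fd * C * Ad) := by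
    refine ⟨?_, ?_, ?_, ?_⟩
    · rw [hGX, Matrix.mul_sub, hA.1]
      simp only [← Matrix.mul_assoc]
      rw [e1]
    · rw [hXG, Matrix.mul_add]
      simp only [← Matrix.mul_assoc]
      rw [hA.2.1]
    · rw [hGX]; exact hA.2.2.1
    · rw [hXG]; exact hA.2.2.2
  exact mp_unique _ Gd _ hG hMP
end

section
/- Suppose all eight inclusions of the two block-inverse theorems hold: R(Cᵀ) ⊆ R(Aᵀ), R(B) ⊆ R(A), R((A†B)ᵀ) ⊆ R(Fᵀ), R(CA†) ⊆ R(F), R(C) ⊆ R(D), R(Bᵀ) ⊆ R(Dᵀ), R(BD†) ⊆ R(G), R((D†C)ᵀ) ⊆ R(Gᵀ), where F = D - CA†B and G = A - BD†C. Then M† = [[G†, -A†BF†],[-D†CG†, F†]]. -/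
open Matrix LinearMap

namespace MPaux

lemma mp_transpose {a b : ℕ} {A : Matrix (Fin a) (Fin b) ℝ} {X : Matrix (Fin b) (Fin a) ℝ}
    (h : IsMoorePenrose A X) : IsMoorePenrose Aᵀ Xᵀ := by
  obtain ⟨h1, h2, h3, h4⟩ := h
  refine ⟨?_, ?_, ?_, ?_⟩
  · calc Aᵀ * Xᵀ * Aᵀ = (A * (X * A))ᵀ := by simp [Matrix.transpose_mul, Matrix.mul_assoc]
    _ = Aᵀ := by rw [← Matrix.mul_assoc, h1]
  · calc Xᵀ * Aᵀ * Xᵀ = (X * (A * X))ᵀ := by simp [Matrix.transpose_mul, Matrix.mul_assoc]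
    _ = Xᵀ := by rw [← Matrix.mul_assoc, h2]
  · calc (Aᵀ * Xᵀ)ᵀ = X * A := by simp [Matrix.transpose_mul]
    _ = (X * A)ᵀ := h4.symm
    _ = Aᵀ * Xᵀ := by simp [Matrix.transpose_mul]
  · calc (Xᵀ * Aᵀ)ᵀ = A * X := by simp [Matrix.transpose_mul]
    _ = (A * X)ᵀ := h3.symm
    _ = Xᵀ * Aᵀ := by simp [Matrix.transpose_mul]

lemma mp_unique {a b : ℕ} {A : Matrix (Fin a) (Fin b) ℝ} {X Y : Matrix (Fin b) (Fin a) ℝ}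
    (hX : IsMoorePenrose A X) (hY : IsMoorePenrose A Y) : X = Y := by
  obtain ⟨x1, x2, x3, x4⟩ := hX
  obtain ⟨y1, y2, y3, y4⟩ := hY
  have hAX : A * X = A * Y := by
    calc A * X = (A * X)ᵀ := x3.symm
    _ = Xᵀ * Aᵀ := by simp [Matrix.transpose_mul]
    _ = Xᵀ * (A * Y * A)ᵀ := by rw [y1]
    _ = Xᵀ * (Aᵀ * (A * Y)ᵀ) := by simp [Matrix.transpose_mul, Matrix.mul_assoc]
    _ = (A * X)ᵀ * (A * Y)ᵀ := by simp [Matrix.transpose_mul, Matrix.mul_assoc]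
    _ = (A * X) * (A * Y) := by rw [x3, y3]
    _ = (A * X * A) * Y := by simp [Matrix.mul_assoc]
    _ = A * Y := by rw [x1]
  have hXA : X * A = Y * A := by
    calc X * A = (X * A)ᵀ := x4.symm
    _ = Aᵀ * Xᵀ := by simp [Matrix.transpose_mul]
    _ = (A * Y * A)ᵀ * Xᵀ := by rw [y1]
    _ = (Y * A)ᵀ * (Aᵀ * Xᵀ) := by simp [Matrix.transpose_mul, Matrix.mul_assoc]
    _ = (Y * A)ᵀ * (X * A)ᵀ := by simp [Matrix.transpose_mul]
    _ = (Y * A) * (X * A) := by rw [x4, y4]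
    _ = Y * (A * X * A) := by simp [Matrix.mul_assoc]
    _ = Y * A := by rw [x1]
  calc X = X * A * X := x2.symm
  _ = X * (A * Y) := by rw [Matrix.mul_assoc, hAX]
  _ = (Y * A) * Y := by rw [← Matrix.mul_assoc, hXA]
  _ = Y := y2

lemma range_le {a b c : ℕ} {A : Matrix (Fin a) (Fin b) ℝ} {Ad : Matrix (Fin b) (Fin a) ℝ}
    (hA : A * Ad * A = A) {B : Matrix (Fin a) (Fin c) ℝ}
    (h : LinearMap.range (Matrix.mulVecLin B) ≤ LinearMap.range (Matrix.mulVecLin A)) :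
    A * Ad * B = B := by
  ext i j
  have hv : ∀ v, (A * Ad * B) *ᵥ v = B *ᵥ v := by
    intro v
    obtain ⟨w, hw⟩ := h (LinearMap.mem_range_self (Matrix.mulVecLin B) v)
    simp only [Matrix.mulVecLin_apply] at hw
    calc (A * Ad * B) *ᵥ v = A *ᵥ (Ad *ᵥ (B *ᵥ v)) := by
          simp [← Matrix.mulVec_mulVec]
    _ = A *ᵥ (Ad *ᵥ (A *ᵥ w)) := by rw [hw]
    _ = (A * Ad * A) *ᵥ w := by simp [← Matrix.mulVec_mulVec]
    _ = B *ᵥ v := by rw [hA, hw]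
  have := congrFun (hv (Pi.single j 1)) i
  simpa [Matrix.mulVec_single_one] using this

end MPaux
theorem stmt9
    {m n s p : ℕ}
    (A : Matrix (Fin m) (Fin n) ℝ) (B : Matrix (Fin m) (Fin p) ℝ)
    (C : Matrix (Fin s) (Fin n) ℝ) (D : Matrix (Fin s) (Fin p) ℝ)
    (Ad : Matrix (Fin n) (Fin m) ℝ) (hA : IsMoorePenrose A Ad)
    (Dd : Matrix (Fin p) (Fin s) ℝ) (hD : IsMoorePenrose D Dd)
    (Fd : Matrix (Fin p) (Fin s) ℝ) (hF : IsMoorePenrose (D - C * Ad * B) Fd)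
    (Gd : Matrix (Fin n) (Fin m) ℝ) (hG : IsMoorePenrose (A - B * Dd * C) Gd)
    (hCt : LinearMap.range (Matrix.mulVecLin (Cᵀ)) ≤ LinearMap.range (Matrix.mulVecLin (Aᵀ)))
    (hB : LinearMap.range (Matrix.mulVecLin (B)) ≤ LinearMap.range (Matrix.mulVecLin (A)))
    (hAB : LinearMap.range (Matrix.mulVecLin ((Ad * B)ᵀ)) ≤ LinearMap.range (Matrix.mulVecLin ((D - C * Ad * B)ᵀ)))
    (hCA : LinearMap.range (Matrix.mulVecLin (C * Ad)) ≤ LinearMap.range (Matrix.mulVecLin (D - C * Ad * B)))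
    (hC : LinearMap.range (Matrix.mulVecLin (C)) ≤ LinearMap.range (Matrix.mulVecLin (D)))
    (hBt : LinearMap.range (Matrix.mulVecLin (Bᵀ)) ≤ LinearMap.range (Matrix.mulVecLin (Dᵀ)))
    (hBD : LinearMap.range (Matrix.mulVecLin (B * Dd)) ≤ LinearMap.range (Matrix.mulVecLin (A - B * Dd * C)))
    (hDC : LinearMap.range (Matrix.mulVecLin ((Dd * C)ᵀ)) ≤ LinearMap.range (Matrix.mulVecLin ((A - B * Dd * C)ᵀ)))
 :
    IsMoorePenrose (Matrix.fromBlocks A B C D)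
      (Matrix.fromBlocks Gd (-(Ad * B * Fd)) (-(Dd * C * Gd)) Fd) := by
  set F := D - C * Ad * B with hFdef
  set G := A - B * Dd * C with hGdef
  -- Penrose components
  obtain ⟨hA1, hA2, hA3, hA4⟩ := hA
  obtain ⟨hD1, hD2, hD3, hD4⟩ := hD
  obtain ⟨hF1, hF2, hF3, hF4⟩ := hF
  obtain ⟨hG1, hG2, hG3, hG4⟩ := hG
  -- algebraic identities from range inclusions
  have e1 : A * Ad * B = B := MPaux.range_le hA1 hB
  have e5 : D * Dd * C = C := MPaux.range_le hD1 hC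
  have e3 : F * Fd * (C * Ad) = C * Ad := MPaux.range_le hF1 hCA
  have e7 : G * Gd * (B * Dd) = B * Dd := MPaux.range_le hG1 hBD
  have e3L : F * Fd * C * Ad = C * Ad := by rw [Matrix.mul_assoc (F * Fd), e3]
  have e7L : G * Gd * B * Dd = B * Dd := by rw [Matrix.mul_assoc (G * Gd), e7]
  have e2 : C * Ad * A = C := by
    have e := MPaux.range_le (MPaux.mp_transpose ⟨hA1, hA2, hA3, hA4⟩).1 hCt
    have := congrArg Matrix.transpose e
    simpa [Matrix.transpose_mul, Matrix.mul_assoc] using this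
  have e6 : B * Dd * D = B := by
    have e := MPaux.range_le (MPaux.mp_transpose ⟨hD1, hD2, hD3, hD4⟩).1 hBt
    have := congrArg Matrix.transpose e
    simpa [Matrix.transpose_mul, Matrix.mul_assoc] using this
  have e4 : Ad * B * Fd * F = Ad * B := by
    have e := MPaux.range_le (MPaux.mp_transpose ⟨hF1, hF2, hF3, hF4⟩).1 hAB
    have := congrArg Matrix.transpose e
    simpa [Matrix.transpose_mul, Matrix.mul_assoc] using this
  have e8 : Dd * C * Gd * G = Dd * C := by
    have e := MPaux.range_le (MPaux.mp_transpose ⟨hG1, hG2, hG3, hG4⟩).1 hDC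
    have := congrArg Matrix.transpose e
    simpa [Matrix.transpose_mul, Matrix.mul_assoc] using this
  -- right-assoc forms and quantified versions
  have r1 : A * (Ad * B) = B := by simp only [← Matrix.mul_assoc]; rw [e1]
  have r1X : ∀ {k : ℕ} (X : Matrix (Fin p) (Fin k) ℝ), A * (Ad * (B * X)) = B * X := by
    intro k X; simp only [← Matrix.mul_assoc]; rw [e1]
  have r2 : C * (Ad * A) = C := by simp only [← Matrix.mul_assoc]; rw [e2]
  have r2X : ∀ {k : ℕ} (X : Matrix (Fin n) (Fin k) ℝ), C * (Ad * (A * X)) = C * X := by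
    intro k X; simp only [← Matrix.mul_assoc]; rw [e2]
  have r3 : F * (Fd * (C * Ad)) = C * Ad := by simp only [← Matrix.mul_assoc]; rw [e3L]
  have r3X : ∀ {k : ℕ} (X : Matrix (Fin m) (Fin k) ℝ), F * (Fd * (C * (Ad * X))) = C * (Ad * X) := by
    intro k X; simp only [← Matrix.mul_assoc]; rw [e3L]
  have r4 : Ad * (B * (Fd * F)) = Ad * B := by simp only [← Matrix.mul_assoc]; rw [e4]
  have r4X : ∀ {k : ℕ} (X : Matrix (Fin p) (Fin k) ℝ), Ad * (B * (Fd * (F * X))) = Ad * (B * X) := by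
    intro k X; simp only [← Matrix.mul_assoc]; rw [e4]
  have r5 : D * (Dd * C) = C := by simp only [← Matrix.mul_assoc]; rw [e5]
  have r5X : ∀ {k : ℕ} (X : Matrix (Fin n) (Fin k) ℝ), D * (Dd * (C * X)) = C * X := by
    intro k X; simp only [← Matrix.mul_assoc]; rw [e5]
  have r6 : B * (Dd * D) = B := by simp only [← Matrix.mul_assoc]; rw [e6]
  have r6X : ∀ {k : ℕ} (X : Matrix (Fin p) (Fin k) ℝ), B * (Dd * (D * X)) = B * X := by
    intro k X; simp only [← Matrix.mul_assoc]; rw [e6]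
  have r7X : ∀ {k : ℕ} (X : Matrix (Fin s) (Fin k) ℝ), G * (Gd * (B * (Dd * X))) = B * (Dd * X) := by
    intro k X; simp only [← Matrix.mul_assoc]; rw [e7L]
  have r8X : ∀ {k : ℕ} (X : Matrix (Fin n) (Fin k) ℝ), Dd * (C * (Gd * (G * X))) = Dd * (C * X) := by
    intro k X; simp only [← Matrix.mul_assoc]; rw [e8]
  have pA1X : ∀ {k : ℕ} (X : Matrix (Fin n) (Fin k) ℝ), A * (Ad * (A * X)) = A * X := by
    intro k X; simp only [← Matrix.mul_assoc]; rw [hA1]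
  have pA2 : Ad * (A * Ad) = Ad := by simp only [← Matrix.mul_assoc]; rw [hA2]
  have pA2X : ∀ {k : ℕ} (X : Matrix (Fin m) (Fin k) ℝ), Ad * (A * (Ad * X)) = Ad * X := by
    intro k X; simp only [← Matrix.mul_assoc]; rw [hA2]
  have pD1 : D * (Dd * D) = D := by simp only [← Matrix.mul_assoc]; rw [hD1]
  have pF1 : F * (Fd * F) = F := by simp only [← Matrix.mul_assoc]; rw [hF1]
  have pF2 : Fd * (F * Fd) = Fd := by simp only [← Matrix.mul_assoc]; rw [hF2]
  have pG1 : G * (Gd * G) = G := by simp only [← Matrix.mul_assoc]; rw [hG1]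
  have pG2 : Gd * (G * Gd) = Gd := by simp only [← Matrix.mul_assoc]; rw [hG2]
  -- unfolding rules
  have hCAB : C * (Ad * B) = D - F := by rw [hFdef, ← Matrix.mul_assoc]; abel
  have hCABX : ∀ {k : ℕ} (X : Matrix (Fin p) (Fin k) ℝ),
      C * (Ad * (B * X)) = D * X - F * X := by
    intro k X
    calc C * (Ad * (B * X)) = C * (Ad * B) * X := by simp only [Matrix.mul_assoc]
    _ = (D - F) * X := by rw [hCAB]
    _ = D * X - F * X := Matrix.sub_mul _ _ _
  have hA_eq : A = G + B * Dd * C := by rw [hGdef]; abel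
  have hD_eq : D = F + C * Ad * B := by rw [hFdef]; abel
  -- Fd * D * Dd = Fd  and  Dd * D * Fd = Fd
  have hDDF : D * Dd * F = F := by
    rw [hFdef, Matrix.mul_sub]
    rw [hD1]
    simp only [← Matrix.mul_assoc]
    rw [e5]
  have hFtD : Fᵀ * (D * Dd) = Fᵀ := by
    calc Fᵀ * (D * Dd) = Fᵀ * (D * Dd)ᵀ := by rw [hD3]
    _ = Fᵀ * (Ddᵀ * Dᵀ) := by rw [Matrix.transpose_mul]
    _ = (D * Dd * F)ᵀ := by simp only [Matrix.transpose_mul, Matrix.mul_assoc]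
    _ = Fᵀ := by rw [hDDF]
  have hFDD : Fd * (D * Dd) = Fd := by
    calc Fd * (D * Dd) = Fd * F * Fd * (D * Dd) := by rw [hF2]
    _ = Fd * ((F * Fd)ᵀ * (D * Dd)) := by rw [hF3]; simp only [Matrix.mul_assoc]
    _ = Fd * (Fdᵀ * (Fᵀ * (D * Dd))) := by simp only [Matrix.transpose_mul, Matrix.mul_assoc]
    _ = Fd * (Fdᵀ * Fᵀ) := by rw [hFtD]
    _ = Fd * (F * Fd)ᵀ := by rw [Matrix.transpose_mul]
    _ = Fd * (F * Fd) := by rw [hF3]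
    _ = Fd := pF2
  have hFDdD : F * (Dd * D) = F := by
    rw [hFdef, Matrix.sub_mul]
    simp only [← Matrix.mul_assoc]
    rw [hD1, Matrix.mul_assoc (C * Ad) B Dd, Matrix.mul_assoc (C * Ad) (B * Dd) D, e6]
  have hDtF : (Dd * D) * Fᵀ = Fᵀ := by
    calc (Dd * D) * Fᵀ = (Dd * D)ᵀ * Fᵀ := by rw [hD4]
    _ = (F * (Dd * D))ᵀ := (Matrix.transpose_mul F (Dd * D)).symm
    _ = Fᵀ := by rw [hFDdD]
  have hDDFd : Dd * D * Fd = Fd := by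
    calc Dd * D * Fd = Dd * D * (Fd * F * Fd) := by rw [hF2]
    _ = Dd * D * ((Fd * F)ᵀ * Fd) := by rw [hF4]
    _ = (Dd * D) * Fᵀ * (Fdᵀ * Fd) := by simp only [Matrix.transpose_mul, Matrix.mul_assoc]
    _ = Fᵀ * (Fdᵀ * Fd) := by rw [hDtF]
    _ = (Fd * F)ᵀ * Fd := by simp only [Matrix.transpose_mul, Matrix.mul_assoc]
    _ = Fd * F * Fd := by rw [hF4]
    _ = Fd := hF2
  have hDDFdX : ∀ {k : ℕ} (X : Matrix (Fin s) (Fin k) ℝ), Dd * (D * (Fd * X)) = Fd * X := by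
    intro k X; simp only [← Matrix.mul_assoc]; rw [hDDFd]
  -- H is the Moore-Penrose inverse of G
  have hGH : G * (Ad + Ad * B * Fd * (C * Ad)) = A * Ad := by
    rw [hGdef]
    simp only [Matrix.sub_mul, Matrix.mul_sub, Matrix.mul_add, Matrix.add_mul,
      Matrix.mul_assoc]
    simp only [r1X, hCABX, Matrix.mul_sub, Matrix.mul_add, Matrix.sub_mul, Matrix.add_mul,
      Matrix.mul_assoc, r6X, r3, r3X, r5, r5X]
    abel
  have hHG : (Ad + Ad * B * Fd * (C * Ad)) * G = Ad * A := by
    rw [hGdef]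
    simp only [Matrix.sub_mul, Matrix.mul_sub, Matrix.mul_add, Matrix.add_mul,
      Matrix.mul_assoc]
    simp only [hCABX, Matrix.mul_sub, Matrix.mul_add, Matrix.sub_mul, Matrix.add_mul,
      Matrix.mul_assoc, r2, r2X, r5, r5X, r4, r4X]
    abel
  have hHmp : IsMoorePenrose G (Ad + Ad * B * Fd * (C * Ad)) := by
    refine ⟨?_, ?_, ?_, ?_⟩
    · rw [hGH, hGdef]
      simp only [Matrix.mul_sub, Matrix.mul_assoc, pA1X, r1X]
      simp only [← Matrix.mul_assoc, hA1, e1]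
    · rw [Matrix.mul_assoc, hGH]
      simp only [Matrix.add_mul, Matrix.mul_add, Matrix.mul_assoc, pA2, pA2X]
    · rw [hGH, hA3]
    · rw [hHG, hA4]
  have hGdH : Gd = Ad + Ad * B * Fd * (C * Ad) := MPaux.mp_unique ⟨hG1, hG2, hG3, hG4⟩ hHmp
  -- key mixed identities
  have keyI : Gd * B * Dd = Ad * B * Fd := by
    rw [hGdH]
    simp only [Matrix.add_mul, Matrix.mul_assoc]
    simp only [hCABX, Matrix.mul_sub, Matrix.mul_assoc, hFDD, r4X]
    simp only [← Matrix.mul_assoc, hFDD, e4]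
    abel
  have keyIX : ∀ {k : ℕ} (X : Matrix (Fin s) (Fin k) ℝ),
      Gd * (B * (Dd * X)) = Ad * (B * (Fd * X)) := by
    intro k X; simp only [← Matrix.mul_assoc]; rw [keyI]
  have keyII : Dd * C * Gd = Fd * (C * Ad) := by
    rw [hGdH]
    simp only [Matrix.mul_add, Matrix.mul_assoc]
    simp only [hCABX, Matrix.mul_sub, Matrix.mul_assoc, hDDFdX, r3, r3X]
    abel
  have keyIIX : ∀ {k : ℕ} (X : Matrix (Fin m) (Fin k) ℝ),
      Dd * (C * (Gd * X)) = Fd * (C * (Ad * X)) := by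
    intro k X
    calc Dd * (C * (Gd * X)) = Dd * C * Gd * X := by simp only [Matrix.mul_assoc]
    _ = Fd * (C * Ad) * X := by rw [keyII]
    _ = Fd * (C * (Ad * X)) := by simp only [Matrix.mul_assoc]
  -- block computations
  have hMX : Matrix.fromBlocks A B C D *
      Matrix.fromBlocks Gd (-(Ad * B * Fd)) (-(Dd * C * Gd)) Fd
      = Matrix.fromBlocks (G * Gd) 0 0 (F * Fd) := by
    rw [Matrix.fromBlocks_multiply]
    have q11 : A * Gd + B * -(Dd * C * Gd) = G * Gd := by
      rw [hGdef]
      simp only [Matrix.mul_neg, Matrix.sub_mul, Matrix.mul_assoc]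
      abel
    have q12 : A * -(Ad * B * Fd) + B * Fd = 0 := by
      simp only [Matrix.mul_neg, Matrix.mul_assoc, r1X]
      abel
    have q21 : C * Gd + D * -(Dd * C * Gd) = 0 := by
      simp only [Matrix.mul_neg, Matrix.mul_assoc, r5X]
      abel
    have q22 : C * -(Ad * B * Fd) + D * Fd = F * Fd := by
      rw [hFdef]
      simp only [Matrix.mul_neg, Matrix.sub_mul, Matrix.mul_assoc]
      abel
    rw [q11, q12, q21, q22]
  have hXM : Matrix.fromBlocks Gd (-(Ad * B * Fd)) (-(Dd * C * Gd)) Fd *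
      Matrix.fromBlocks A B C D
      = Matrix.fromBlocks (Gd * G) 0 0 (Fd * F) := by
    rw [Matrix.fromBlocks_multiply]
    have q11 : Gd * A + -(Ad * B * Fd) * C = Gd * G := by
      rw [hGdef]
      simp only [Matrix.neg_mul, Matrix.mul_sub, Matrix.mul_assoc, keyIX]
      abel
    have q12 : Gd * B + -(Ad * B * Fd) * D = 0 := by
      have h : Gd * B = Ad * (B * (Fd * D)) := by
        calc Gd * B = Gd * (B * (Dd * D)) := by rw [r6]
        _ = Ad * (B * (Fd * D)) := keyIX D
      simp only [Matrix.neg_mul, Matrix.mul_assoc, h]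
      abel
    have q21 : -(Dd * C * Gd) * A + Fd * C = 0 := by
      have h : Fd * C = Dd * (C * (Gd * A)) := by
        calc Fd * C = Fd * (C * (Ad * A)) := by rw [r2]
        _ = Dd * (C * (Gd * A)) := (keyIIX A).symm
      simp only [Matrix.neg_mul, Matrix.mul_assoc, h]
      abel
    have q22 : -(Dd * C * Gd) * B + Fd * D = Fd * F := by
      rw [hFdef]
      simp only [Matrix.neg_mul, Matrix.mul_sub, Matrix.mul_assoc, keyIIX]
      abel
    rw [q11, q12, q21, q22]
  -- assemble
  refine ⟨?_, ?_, ?_, ?_⟩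
  · rw [hMX, Matrix.fromBlocks_multiply]
    have q11 : G * Gd * A + (0 : Matrix (Fin m) (Fin s) ℝ) * C = A := by
      simp only [Matrix.zero_mul, add_zero]
      simp only [hA_eq, Matrix.mul_add, Matrix.mul_assoc, pG1, r7X]
    have q12 : G * Gd * B + (0 : Matrix (Fin m) (Fin s) ℝ) * D = B := by
      simp only [Matrix.zero_mul, add_zero]
      calc G * Gd * B = G * (Gd * (B * (Dd * D))) := by
            rw [r6]; simp only [Matrix.mul_assoc]
      _ = B * (Dd * D) := r7X D
      _ = B := r6
    have q21 : (0 : Matrix (Fin s) (Fin m) ℝ) * A + F * Fd * C = C := by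
      simp only [Matrix.zero_mul, zero_add]
      calc F * Fd * C = F * (Fd * (C * (Ad * A))) := by
            rw [r2]; simp only [Matrix.mul_assoc]
      _ = C * (Ad * A) := r3X A
      _ = C := r2
    have q22 : (0 : Matrix (Fin s) (Fin m) ℝ) * B + F * Fd * D = D := by
      simp only [Matrix.zero_mul, zero_add]
      simp only [hD_eq, Matrix.mul_add, Matrix.mul_assoc, pF1, r3X]
    rw [q11, q12, q21, q22]
  · rw [Matrix.mul_assoc, hMX, Matrix.fromBlocks_multiply]
    have q11 : Gd * (G * Gd) + -(Ad * B * Fd) * (0 : Matrix (Fin s) (Fin m) ℝ) = Gd := by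
      simp only [Matrix.mul_zero, add_zero, pG2]
    have q12 : Gd * (0 : Matrix (Fin m) (Fin s) ℝ) + -(Ad * B * Fd) * (F * Fd)
        = -(Ad * B * Fd) := by
      simp only [Matrix.mul_zero, zero_add, Matrix.neg_mul, Matrix.mul_assoc, r4X]
    have q21 : -(Dd * C * Gd) * (G * Gd) + Fd * (0 : Matrix (Fin s) (Fin m) ℝ)
        = -(Dd * C * Gd) := by
      simp only [Matrix.mul_zero, add_zero, Matrix.neg_mul, Matrix.mul_assoc, r8X]
    have q22 : -(Dd * C * Gd) * (0 : Matrix (Fin m) (Fin s) ℝ) + Fd * (F * Fd) = Fd := by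
      simp only [Matrix.mul_zero, zero_add, pF2]
    rw [q11, q12, q21, q22]
  · rw [hMX, Matrix.fromBlocks_transpose, hG3, hF3]
    simp
  · rw [hXM, Matrix.fromBlocks_transpose, hG4, hF4]
    simp
end

section
/- If R(B) ⊆ R(A) and R((A†B)ᵀ) ⊆ R(Fᵀ) where F = D - CA†B, then BF†F = B. -/
open Matrix LinearMap

lemma ext_of_mulVec_eq {k l : ℕ} {M N : Matrix (Fin k) (Fin l) ℝ}
    (h : ∀ v, M.mulVec v = N.mulVec v) : M = N := by
  ext i j
  have := congrFun (h (Pi.single j 1)) i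
  simpa [Matrix.mulVec_single_one] using this

/-- If range B ≤ range A and A X A = A then A X B = B. -/
lemma proj_eq {k l r : ℕ} {A : Matrix (Fin k) (Fin l) ℝ} {X : Matrix (Fin l) (Fin k) ℝ}
    {B : Matrix (Fin k) (Fin r) ℝ}
    (hr : LinearMap.range (Matrix.mulVecLin B) ≤ LinearMap.range (Matrix.mulVecLin A))
    (hAXA : A * X * A = A) : A * X * B = B := by
  apply ext_of_mulVec_eq
  intro v
  obtain ⟨x, hx⟩ := hr ⟨v, rfl⟩
  simp only [Matrix.mulVecLin_apply] at hx
  calc (A * X * B).mulVec v = (A * X).mulVec (B.mulVec v) := by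
        rw [Matrix.mulVec_mulVec]
    _ = (A * X).mulVec (A.mulVec x) := by rw [hx]
    _ = (A * X * A).mulVec x := by rw [Matrix.mulVec_mulVec]
    _ = A.mulVec x := by rw [hAXA]
    _ = B.mulVec v := hx

theorem stmt10
    {m n s p : ℕ}
    (A : Matrix (Fin m) (Fin n) ℝ) (B : Matrix (Fin m) (Fin p) ℝ)
    (C : Matrix (Fin s) (Fin n) ℝ) (D : Matrix (Fin s) (Fin p) ℝ)
    (Ad : Matrix (Fin n) (Fin m) ℝ) (hA : IsMoorePenrose A Ad)
    (Fd : Matrix (Fin p) (Fin s) ℝ) (hF : IsMoorePenrose (D - C * Ad * B) Fd)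
    (hB : LinearMap.range (Matrix.mulVecLin (B)) ≤ LinearMap.range (Matrix.mulVecLin (A)))
    (hAB : LinearMap.range (Matrix.mulVecLin ((Ad * B)ᵀ)) ≤ LinearMap.range (Matrix.mulVecLin ((D - C * Ad * B)ᵀ))) :
    B * Fd * (D - C * Ad * B) = B := by
  set F := D - C * Ad * B with hFdef
  -- A * Ad * B = B
  have h1 : A * Ad * B = B := proj_eq hB hA.1
  -- Fᵀ * Fdᵀ * Fᵀ = Fᵀ
  have hFt : Fᵀ * Fdᵀ * Fᵀ = Fᵀ := by
    have := hF.1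
    calc Fᵀ * Fdᵀ * Fᵀ = (F * Fd * F)ᵀ := by
          simp [Matrix.transpose_mul, Matrix.mul_assoc]
      _ = Fᵀ := by rw [this]
  -- Fᵀ * Fdᵀ * (Ad * B)ᵀ = (Ad * B)ᵀ
  have h2 : Fᵀ * Fdᵀ * (Ad * B)ᵀ = (Ad * B)ᵀ := proj_eq hAB hFt
  -- transpose: Ad * B * Fd * F = Ad * B
  have h3 : Ad * B * Fd * F = Ad * B := by
    have := congrArg Matrix.transpose h2
    simpa [Matrix.transpose_mul, Matrix.mul_assoc] using this
  calc B * Fd * F = A * Ad * B * Fd * F := by rw [h1]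
    _ = A * (Ad * B * Fd * F) := by simp [Matrix.mul_assoc]
    _ = A * (Ad * B) := by rw [h3]
    _ = B := by rw [← Matrix.mul_assoc, h1]
end

section
/- If R(B) ⊆ R(A) and R((A†B)ᵀ) ⊆ R(Fᵀ) where F = D - CA†B, then DF†F = D. -/
open Matrix LinearMap

theorem stmt11
    {m n s p : ℕ}
    (A : Matrix (Fin m) (Fin n) ℝ) (B : Matrix (Fin m) (Fin p) ℝ)
    (C : Matrix (Fin s) (Fin n) ℝ) (D : Matrix (Fin s) (Fin p) ℝ)
    (Ad : Matrix (Fin n) (Fin m) ℝ) (hA : IsMoorePenrose A Ad)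
    (Fd : Matrix (Fin p) (Fin s) ℝ) (hF : IsMoorePenrose (D - C * Ad * B) Fd)
    (hB : LinearMap.range (Matrix.mulVecLin (B)) ≤ LinearMap.range (Matrix.mulVecLin (A)))
    (hAB : LinearMap.range (Matrix.mulVecLin ((Ad * B)ᵀ)) ≤ LinearMap.range (Matrix.mulVecLin ((D - C * Ad * B)ᵀ))) :
    D * Fd * (D - C * Ad * B) = D := by
  set F := D - C * Ad * B with hFdef
  obtain ⟨h1, h2, h3, h4⟩ := hF
  -- Fd * F * Fᵀ = Fᵀ
  have hFFt : Fd * F * Fᵀ = Fᵀ := by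
    calc Fd * F * Fᵀ = (Fd * F)ᵀ * Fᵀ := by rw [h4]
    _ = (F * (Fd * F))ᵀ := by rw [← Matrix.transpose_mul]
    _ = Fᵀ := by rw [← Matrix.mul_assoc, h1]
  -- Fd * F fixes columns of (Ad*B)ᵀ
  have hvec : ∀ v : Fin n → ℝ, (Fd * F).mulVec ((Ad * B)ᵀ.mulVec v) = (Ad * B)ᵀ.mulVec v := by
    intro v
    obtain ⟨x, hx⟩ := hAB ⟨v, rfl⟩
    simp only [mulVecLin_apply] at hx
    rw [← hx, mulVec_mulVec, hFFt]
  have hkey : (Fd * F) * (Ad * B)ᵀ = (Ad * B)ᵀ := by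
    ext i j
    have := congrFun (hvec (Pi.single j 1)) i
    rw [mulVec_mulVec, mulVec_single_one, mulVec_single_one] at this
    simpa only [Matrix.transpose_apply, Matrix.col_apply] using this
  -- transpose: Ad*B*(Fd*F) = Ad*B
  have hkey' : Ad * B * (Fd * F) = Ad * B := by
    have := congrArg Matrix.transpose hkey
    rwa [transpose_mul, transpose_transpose, ← h4, transpose_transpose] at this
  have hD : D = F + C * (Ad * B) := by
    rw [hFdef]; rw [Matrix.mul_assoc]; abel
  calc D * Fd * F = (F + C * (Ad * B)) * Fd * F := by rw [← hD]
  _ = F * Fd * F + C * (Ad * B * (Fd * F)) := by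
      rw [Matrix.add_mul, Matrix.add_mul]
      rw [Matrix.mul_assoc (C * (Ad*B)), Matrix.mul_assoc C]
  _ = F + C * (Ad * B) := by rw [h1, hkey']
  _ = D := hD.symm
end

section
/- Suppose R(Cᵀ) ⊆ R(Aᵀ) and R((A†B)ᵀ) ⊆ R(Fᵀ), where F = D - CA†B. Then with X = [[A† + A†BF†CA†, -A†BF†],[-F†CA†, F†]] and M = [[A,B],[C,D]], one has XM = [[A†A, 0],[0, F†F]]; in particular XM is symmetric. -/
open Matrix LinearMap

lemma key {a b c : ℕ} (M : Matrix (Fin a) (Fin b) ℝ) (Md : Matrix (Fin b) (Fin a) ℝ)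
    (hM : IsMoorePenrose M Md) (N : Matrix (Fin c) (Fin b) ℝ)
    (h : LinearMap.range (Matrix.mulVecLin (Nᵀ)) ≤ LinearMap.range (Matrix.mulVecLin (Mᵀ))) :
    N * Md * M = N := by
  have hMM : Md * M * Mᵀ = Mᵀ := by
    calc Md * M * Mᵀ = (M * (Md * M)ᵀ)ᵀ := by
          rw [Matrix.transpose_mul, Matrix.transpose_transpose]
    _ = Mᵀ := by rw [hM.2.2.2, ← Matrix.mul_assoc, hM.1]
  have h2 : Md * M * Nᵀ = Nᵀ := by
    ext i j
    obtain ⟨u, hu⟩ := h ⟨Pi.single j 1, rfl⟩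
    simp only [Matrix.mulVecLin_apply] at hu
    have hv : (Md * M * Nᵀ) *ᵥ Pi.single j 1 = Nᵀ *ᵥ Pi.single j 1 := by
      rw [← Matrix.mulVec_mulVec, ← hu, Matrix.mulVec_mulVec, hMM]
    have := congrFun hv i
    simpa [Matrix.mulVec_single] using this
  calc N * Md * M = ((Md * M)ᵀ * Nᵀ)ᵀ := by
        rw [Matrix.transpose_mul, Matrix.transpose_transpose, Matrix.transpose_transpose,
          Matrix.mul_assoc]
    _ = N := by rw [hM.2.2.2, h2, Matrix.transpose_transpose]

theorem stmt13
    {m n s p : ℕ}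
    (A : Matrix (Fin m) (Fin n) ℝ) (B : Matrix (Fin m) (Fin p) ℝ)
    (C : Matrix (Fin s) (Fin n) ℝ) (D : Matrix (Fin s) (Fin p) ℝ)
    (Ad : Matrix (Fin n) (Fin m) ℝ) (hA : IsMoorePenrose A Ad)
    (Fd : Matrix (Fin p) (Fin s) ℝ) (hF : IsMoorePenrose (D - C * Ad * B) Fd)
    (hCt : LinearMap.range (Matrix.mulVecLin (Cᵀ)) ≤ LinearMap.range (Matrix.mulVecLin (Aᵀ)))
    (hAB : LinearMap.range (Matrix.mulVecLin ((Ad * B)ᵀ)) ≤ LinearMap.range (Matrix.mulVecLin ((D - C * Ad * B)ᵀ))) :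
    Matrix.fromBlocks (Ad + Ad * B * Fd * C * Ad) (-(Ad * B * Fd)) (-(Fd * C * Ad)) Fd *
        Matrix.fromBlocks A B C D
      = Matrix.fromBlocks (Ad * A) 0 0 (Fd * (D - C * Ad * B)) ∧
    (Matrix.fromBlocks (Ad + Ad * B * Fd * C * Ad) (-(Ad * B * Fd)) (-(Fd * C * Ad)) Fd *
        Matrix.fromBlocks A B C D)ᵀ
      = Matrix.fromBlocks (Ad + Ad * B * Fd * C * Ad) (-(Ad * B * Fd)) (-(Fd * C * Ad)) Fd *
        Matrix.fromBlocks A B C D := by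
  have hC : C * Ad * A = C := key A Ad hA C hCt
  have hB : Ad * B * Fd * (D - C * Ad * B) = Ad * B := key _ Fd hF (Ad * B) hAB
  have hCr : C * (Ad * A) = C := by rw [← Matrix.mul_assoc]; exact hC
  have h11 : (Ad + Ad * B * Fd * C * Ad) * A + -(Ad * B * Fd) * C = Ad * A := by
    simp only [Matrix.add_mul, Matrix.neg_mul, Matrix.mul_assoc, hCr]
    abel
  have h12 : (Ad + Ad * B * Fd * C * Ad) * B + -(Ad * B * Fd) * D = 0 := by
    have hB' := hB
    simp only [Matrix.add_mul, Matrix.neg_mul, Matrix.mul_sub, Matrix.mul_assoc] at hB' ⊢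
    nth_rewrite 1 [← hB']
    abel
  have h21 : -(Fd * C * Ad) * A + Fd * C = 0 := by
    simp only [Matrix.neg_mul, Matrix.mul_assoc, hCr]
    abel
  have h22 : -(Fd * C * Ad) * B + Fd * D = Fd * (D - C * Ad * B) := by
    simp only [Matrix.neg_mul, Matrix.mul_sub, Matrix.mul_assoc]
    abel
  have hmain : Matrix.fromBlocks (Ad + Ad * B * Fd * C * Ad) (-(Ad * B * Fd)) (-(Fd * C * Ad)) Fd *
        Matrix.fromBlocks A B C D
      = Matrix.fromBlocks (Ad * A) 0 0 (Fd * (D - C * Ad * B)) := by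
    rw [Matrix.fromBlocks_multiply, h11, h12, h21, h22]
  refine ⟨hmain, ?_⟩
  rw [hmain, Matrix.fromBlocks_transpose, hA.2.2.2, hF.2.2.2]
  simp
end

section
/- Suppose R(B) ⊆ R(A) and R(CA†) ⊆ R(F), where F = D - CA†B. Then with X = [[A† + A†BF†CA†, -A†BF†],[-F†CA†, F†]] and M = [[A,B],[C,D]], one has MX = [[AA†, 0],[0, FF†]]; in particular MX is symmetric. -/
open Matrix LinearMap

lemma proj_fix_s14 {a b c : ℕ} (A : Matrix (Fin a) (Fin b) ℝ) (Ad : Matrix (Fin b) (Fin a) ℝ)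
    (hAdA : A * Ad * A = A) (X : Matrix (Fin a) (Fin c) ℝ)
    (h : LinearMap.range X.mulVecLin ≤ LinearMap.range A.mulVecLin) : A * Ad * X = X := by
  ext i j
  have hx : X.mulVec (Pi.single j 1) ∈ LinearMap.range A.mulVecLin := h ⟨Pi.single j 1, rfl⟩
  obtain ⟨y, hy⟩ := hx
  simp only [mulVecLin_apply] at hy
  have : (A * Ad * X).mulVec (Pi.single j 1) = X.mulVec (Pi.single j 1) := by
    rw [← Matrix.mulVec_mulVec, ← hy, Matrix.mulVec_mulVec, hAdA, hy]
  have := congrFun this i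
  simpa [Matrix.mulVec_single] using this

theorem stmt14
    {m n s p : ℕ}
    (A : Matrix (Fin m) (Fin n) ℝ) (B : Matrix (Fin m) (Fin p) ℝ)
    (C : Matrix (Fin s) (Fin n) ℝ) (D : Matrix (Fin s) (Fin p) ℝ)
    (Ad : Matrix (Fin n) (Fin m) ℝ) (hA : IsMoorePenrose A Ad)
    (Fd : Matrix (Fin p) (Fin s) ℝ) (hF : IsMoorePenrose (D - C * Ad * B) Fd)
    (hB : LinearMap.range (Matrix.mulVecLin (B)) ≤ LinearMap.range (Matrix.mulVecLin (A)))
    (hCA : LinearMap.range (Matrix.mulVecLin (C * Ad)) ≤ LinearMap.range (Matrix.mulVecLin (D - C * Ad * B))) :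
    Matrix.fromBlocks A B C D *
        Matrix.fromBlocks (Ad + Ad * B * Fd * C * Ad) (-(Ad * B * Fd)) (-(Fd * C * Ad)) Fd
      = Matrix.fromBlocks (A * Ad) 0 0 ((D - C * Ad * B) * Fd) ∧
    (Matrix.fromBlocks A B C D *
        Matrix.fromBlocks (Ad + Ad * B * Fd * C * Ad) (-(Ad * B * Fd)) (-(Fd * C * Ad)) Fd)ᵀ
      = Matrix.fromBlocks A B C D *
        Matrix.fromBlocks (Ad + Ad * B * Fd * C * Ad) (-(Ad * B * Fd)) (-(Fd * C * Ad)) Fd := by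
  have h1 : A * Ad * B = B := proj_fix_s14 A Ad hA.1 B hB
  have h2 : (D - C * Ad * B) * Fd * (C * Ad) = C * Ad :=
    proj_fix_s14 (D - C * Ad * B) Fd hF.1 (C * Ad) hCA
  have h2' : D * Fd * (C * Ad) - C * Ad * B * Fd * (C * Ad) = C * Ad := by
    have := h2; simp only [Matrix.sub_mul] at this; exact this
  have h2'' : D * Fd * (C * Ad) = C * Ad + C * Ad * B * Fd * (C * Ad) :=
    sub_eq_iff_eq_add.mp h2'
  have eTL : A * (Ad + Ad * B * Fd * C * Ad) + B * -(Fd * C * Ad) = A * Ad := by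
    simp only [Matrix.mul_add, Matrix.mul_neg, ← Matrix.mul_assoc, h1]
    abel
  have eTR : A * -(Ad * B * Fd) + B * Fd = 0 := by
    simp only [Matrix.mul_neg, ← Matrix.mul_assoc, h1]
    abel
  have eBL : C * (Ad + Ad * B * Fd * C * Ad) + D * -(Fd * C * Ad) = 0 := by
    simp only [Matrix.mul_add, Matrix.mul_neg, ← Matrix.mul_assoc] at h2'' ⊢
    rw [h2'']
    abel
  have eBR : C * -(Ad * B * Fd) + D * Fd = (D - C * Ad * B) * Fd := by
    simp only [Matrix.mul_neg, ← Matrix.mul_assoc, Matrix.sub_mul]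
    abel
  have main : Matrix.fromBlocks A B C D *
        Matrix.fromBlocks (Ad + Ad * B * Fd * C * Ad) (-(Ad * B * Fd)) (-(Fd * C * Ad)) Fd
      = Matrix.fromBlocks (A * Ad) 0 0 ((D - C * Ad * B) * Fd) := by
    rw [Matrix.fromBlocks_multiply, eTL, eTR, eBL, eBR]
  refine ⟨main, ?_⟩
  rw [main, Matrix.fromBlocks_transpose]
  simp [hA.2.2.1, hF.2.2.1]
end

section
/- Suppose R(Cᵀ) ⊆ R(Aᵀ), R(B) ⊆ R(A), and R((A†B)ᵀ) ⊆ R(Fᵀ), where F = D - CA†B. Then MXM = M, where X = [[A† + A†BF†CA†, -A†BF†],[-F†CA†, F†]] and M = [[A,B],[C,D]]. -/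
open Matrix LinearMap

lemma proj_lemma {a b c : ℕ} (A : Matrix (Fin a) (Fin b) ℝ) (Ad : Matrix (Fin b) (Fin a) ℝ)
    (B : Matrix (Fin a) (Fin c) ℝ) (hA : A * Ad * A = A)
    (h : LinearMap.range (Matrix.mulVecLin B) ≤ LinearMap.range (Matrix.mulVecLin A)) :
    A * Ad * B = B := by
  have key : Matrix.mulVecLin (A * Ad * B) = Matrix.mulVecLin B := by
    refine LinearMap.ext fun x => ?_
    obtain ⟨y, hy⟩ := h ⟨x, rfl⟩
    rw [Matrix.mulVecLin_mul, Matrix.mulVecLin_mul, LinearMap.comp_apply, LinearMap.comp_apply,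
      ← hy, ← LinearMap.comp_apply, ← LinearMap.comp_apply, ← Matrix.mulVecLin_mul,
      ← Matrix.mulVecLin_mul, hA, hy]
  exact LinearMap.toMatrix'.symm.injective key

theorem stmt15
    {m n s p : ℕ}
    (A : Matrix (Fin m) (Fin n) ℝ) (B : Matrix (Fin m) (Fin p) ℝ)
    (C : Matrix (Fin s) (Fin n) ℝ) (D : Matrix (Fin s) (Fin p) ℝ)
    (Ad : Matrix (Fin n) (Fin m) ℝ) (hA : IsMoorePenrose A Ad)
    (Fd : Matrix (Fin p) (Fin s) ℝ) (hF : IsMoorePenrose (D - C * Ad * B) Fd)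
    (hCt : LinearMap.range (Matrix.mulVecLin (Cᵀ)) ≤ LinearMap.range (Matrix.mulVecLin (Aᵀ)))
    (hB : LinearMap.range (Matrix.mulVecLin (B)) ≤ LinearMap.range (Matrix.mulVecLin (A)))
    (hAB : LinearMap.range (Matrix.mulVecLin ((Ad * B)ᵀ)) ≤ LinearMap.range (Matrix.mulVecLin ((D - C * Ad * B)ᵀ))) :
    Matrix.fromBlocks A B C D *
      Matrix.fromBlocks (Ad + Ad * B * Fd * C * Ad) (-(Ad * B * Fd)) (-(Fd * C * Ad)) Fd *
      Matrix.fromBlocks A B C D = Matrix.fromBlocks A B C D := by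
  obtain ⟨hA1, -, -, -⟩ := hA
  obtain ⟨hF1, -, -, -⟩ := hF
  -- A Ad B = B
  have hABeq : A * Ad * B = B := proj_lemma A Ad B hA1 hB
  -- C Ad A = C
  have hCAeq : C * (Ad * A) = C := by
    have hAt : Aᵀ * Adᵀ * Aᵀ = Aᵀ := by
      rw [← Matrix.transpose_mul, ← Matrix.transpose_mul, ← Matrix.mul_assoc, hA1]
    have h1 := proj_lemma Aᵀ Adᵀ Cᵀ hAt hCt
    have h2 := congrArg Matrix.transpose h1
    simpa [Matrix.transpose_mul, Matrix.mul_assoc] using h2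
  -- rewrite D
  have hD : D = (D - C * Ad * B) + C * Ad * B := by abel
  rw [hD]
  set G := D - C * Ad * B with hG
  clear_value G
  have hA0 : A * (Ad * A) = A := by rw [← Matrix.mul_assoc, hA1]
  -- reassociated identities
  have hA1' : ∀ {k : ℕ} (X : Matrix (Fin n) (Fin k) ℝ), A * (Ad * (A * X)) = A * X := by
    intro k X
    rw [← Matrix.mul_assoc, ← Matrix.mul_assoc, hA1]
  have hAB' : ∀ {k : ℕ} (X : Matrix (Fin p) (Fin k) ℝ), A * (Ad * (B * X)) = B * X := by
    intro k X
    rw [← Matrix.mul_assoc, ← Matrix.mul_assoc, hABeq]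
  have hAB0 : A * (Ad * B) = B := by rw [← Matrix.mul_assoc, hABeq]
  have hCA' : ∀ {k : ℕ} (X : Matrix (Fin n) (Fin k) ℝ), C * (Ad * (A * X)) = C * X := by
    intro k X
    rw [← Matrix.mul_assoc, ← Matrix.mul_assoc, Matrix.mul_assoc C Ad A, hCAeq]
  have hCA0 := hCAeq
  have hF' : ∀ {k : ℕ} (X : Matrix (Fin p) (Fin k) ℝ), G * (Fd * (G * X)) = G * X := by
    intro k X
    rw [← Matrix.mul_assoc, ← Matrix.mul_assoc, hF1]
  have hF0 : G * (Fd * G) = G := by rw [← Matrix.mul_assoc, hF1]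
  simp only [Matrix.fromBlocks_multiply]
  simp only [Matrix.mul_add, Matrix.add_mul, Matrix.mul_neg, Matrix.neg_mul,
    Matrix.mul_assoc, hA1', hA0, hAB', hAB0, hCA', hCA0, hF', hF0]
  have b1 : A + B * (Fd * C) + -(B * (Fd * C)) + (-(B * (Fd * C)) + B * (Fd * C)) = A := by abel
  have b2 : B + B * (Fd * (C * (Ad * B))) + -(B * (Fd * (C * (Ad * B)))) +
      (-(B * (Fd * G)) + B * (Fd * G) + (-(B * (Fd * (C * (Ad * B)))) + B * (Fd * (C * (Ad * B))))) = B := by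
    abel
  have b3 : C + C * (Ad * (B * (Fd * C))) + -(G * (Fd * C) + C * (Ad * (B * (Fd * C)))) +
      (-(C * (Ad * (B * (Fd * C)))) + (G * (Fd * C) + C * (Ad * (B * (Fd * C))))) = C := by abel
  have b4 : C * (Ad * B) + C * (Ad * (B * (Fd * (C * (Ad * B))))) +
        -(G * (Fd * (C * (Ad * B))) + C * (Ad * (B * (Fd * (C * (Ad * B)))))) +
      (-(C * (Ad * (B * (Fd * G)))) + (G + C * (Ad * (B * (Fd * G)))) +
        (-(C * (Ad * (B * (Fd * (C * (Ad * B)))))) +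
          (G * (Fd * (C * (Ad * B))) + C * (Ad * (B * (Fd * (C * (Ad * B))))))))
      = G + C * (Ad * B) := by abel
  rw [b1, b2, b3, b4]
end

section
/- Suppose R(Cᵀ) ⊆ R(Aᵀ) and R((A†B)ᵀ) ⊆ R(Fᵀ), where F = D - CA†B. Then XMX = X, where X = [[A† + A†BF†CA†, -A†BF†],[-F†CA†, F†]] and M = [[A,B],[C,D]]. -/
open Matrix LinearMap

lemma range_le_exists_aux {a b c : ℕ} (M : Matrix (Fin a) (Fin b) ℝ)
    (N : Matrix (Fin a) (Fin c) ℝ)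
    (h : LinearMap.range N.mulVecLin ≤ LinearMap.range M.mulVecLin) :
    ∃ Z : Matrix (Fin b) (Fin c) ℝ, M * Z = N := by
  have h' : ∀ j, ∃ v, M.mulVec v = N.mulVec (Pi.single j 1) := by
    intro j
    obtain ⟨v, hv⟩ := h ⟨Pi.single j 1, rfl⟩
    exact ⟨v, by simpa using hv⟩
  choose v hv using h'
  refine ⟨Matrix.of fun i j => v j i, ?_⟩
  ext i j
  have := congrFun (hv j) i
  simpa [Matrix.mul_apply, Matrix.mulVec, dotProduct, Pi.single_apply, mul_ite,
    Finset.sum_ite_eq'] using this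

theorem stmt16
    {m n s p : ℕ}
    (A : Matrix (Fin m) (Fin n) ℝ) (B : Matrix (Fin m) (Fin p) ℝ)
    (C : Matrix (Fin s) (Fin n) ℝ) (D : Matrix (Fin s) (Fin p) ℝ)
    (Ad : Matrix (Fin n) (Fin m) ℝ) (hA : IsMoorePenrose A Ad)
    (Fd : Matrix (Fin p) (Fin s) ℝ) (hF : IsMoorePenrose (D - C * Ad * B) Fd)
    (hCt : LinearMap.range (Matrix.mulVecLin (Cᵀ)) ≤ LinearMap.range (Matrix.mulVecLin (Aᵀ)))
    (hAB : LinearMap.range (Matrix.mulVecLin ((Ad * B)ᵀ)) ≤ LinearMap.range (Matrix.mulVecLin ((D - C * Ad * B)ᵀ))) :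
    Matrix.fromBlocks (Ad + Ad * B * Fd * C * Ad) (-(Ad * B * Fd)) (-(Fd * C * Ad)) Fd *
      Matrix.fromBlocks A B C D *
      Matrix.fromBlocks (Ad + Ad * B * Fd * C * Ad) (-(Ad * B * Fd)) (-(Fd * C * Ad)) Fd
    = Matrix.fromBlocks (Ad + Ad * B * Fd * C * Ad) (-(Ad * B * Fd)) (-(Fd * C * Ad)) Fd := by
  set F : Matrix (Fin s) (Fin p) ℝ := D - C * Ad * B with hFdef
  have hAEA : A * (Ad * A) = A := by rw [← Matrix.mul_assoc]; exact hA.1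
  have hEAE : Ad * (A * Ad) = Ad := by rw [← Matrix.mul_assoc]; exact hA.2.1
  have hFGF : F * (Fd * F) = F := by rw [← Matrix.mul_assoc]; exact hF.1
  have hGFG : Fd * (F * Fd) = Fd := by rw [← Matrix.mul_assoc]; exact hF.2.1
  obtain ⟨Z, hZ⟩ := range_le_exists_aux Aᵀ Cᵀ hCt
  have hC : C = Zᵀ * A := by
    have := congrArg Matrix.transpose hZ
    simpa [Matrix.transpose_mul] using this.symm
  have h5 : C * (Ad * A) = C := by
    rw [hC, Matrix.mul_assoc, hAEA]
  obtain ⟨W, hW⟩ := range_le_exists_aux Fᵀ (Ad * B)ᵀ hAB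
  have hEB : Ad * B = Wᵀ * F := by
    have := congrArg Matrix.transpose hW
    simpa [Matrix.transpose_mul] using this.symm
  have h6 : Ad * (B * (Fd * F)) = Ad * B := by
    rw [← Matrix.mul_assoc, hEB, Matrix.mul_assoc, hFGF]
  have hD : D = C * Ad * B + F := by rw [hFdef]; abel
  have hEAX : ∀ {k : ℕ} (X : Matrix (Fin m) (Fin k) ℝ), Ad * (A * (Ad * X)) = Ad * X := by
    intro k X
    rw [← Matrix.mul_assoc, ← Matrix.mul_assoc, hA.2.1]
  have hGFX : ∀ {k : ℕ} (X : Matrix (Fin s) (Fin k) ℝ), Fd * (F * (Fd * X)) = Fd * X := by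
    intro k X
    rw [← Matrix.mul_assoc, ← Matrix.mul_assoc, hF.2.1]
  have hXM : Matrix.fromBlocks (Ad + Ad * B * Fd * C * Ad) (-(Ad * B * Fd)) (-(Fd * C * Ad)) Fd *
      Matrix.fromBlocks A B C D
      = Matrix.fromBlocks (Ad * A) 0 0 (Fd * F) := by
    rw [Matrix.fromBlocks_multiply, Matrix.fromBlocks_inj]
    refine ⟨?_, ?_, ?_, ?_⟩
    · simp only [hD, Matrix.mul_assoc, Matrix.add_mul, Matrix.mul_add, Matrix.neg_mul,
        Matrix.mul_neg, h5]
      abel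
    · simp only [hD, Matrix.mul_assoc, Matrix.add_mul, Matrix.mul_add, Matrix.neg_mul,
        Matrix.mul_neg, h6]
      abel
    · simp only [hD, Matrix.mul_assoc, Matrix.add_mul, Matrix.mul_add, Matrix.neg_mul,
        Matrix.mul_neg, h5]
      abel
    · simp only [hD, Matrix.mul_assoc, Matrix.add_mul, Matrix.mul_add, Matrix.neg_mul,
        Matrix.mul_neg]
      abel
  rw [hXM, Matrix.fromBlocks_multiply, Matrix.fromBlocks_inj]
  refine ⟨?_, ?_, ?_, ?_⟩
  · simp only [Matrix.mul_assoc, Matrix.add_mul, Matrix.mul_add, Matrix.neg_mul, Matrix.mul_neg,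
      Matrix.zero_mul, Matrix.mul_zero, add_zero, zero_add, neg_zero, hEAE, hEAX]
  · simp only [Matrix.mul_assoc, Matrix.add_mul, Matrix.mul_add, Matrix.neg_mul, Matrix.mul_neg,
      Matrix.zero_mul, Matrix.mul_zero, add_zero, zero_add, hEAX]
  · simp only [Matrix.mul_assoc, Matrix.add_mul, Matrix.mul_add, Matrix.neg_mul, Matrix.mul_neg,
      Matrix.zero_mul, Matrix.mul_zero, add_zero, zero_add, hGFX]
  · simp only [Matrix.mul_assoc, Matrix.add_mul, Matrix.mul_add, Matrix.neg_mul, Matrix.mul_neg,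
      Matrix.zero_mul, Matrix.mul_zero, add_zero, zero_add, neg_zero, hGFG]
end

section
/- If R(Bᵀ) ⊆ R(Dᵀ) and R(C) ⊆ R(D), then the complementary generalized Schur complement A - BYC is the same for every {1}-inverse Y of D (i.e., every Y with DYD = D); in particular A - BYC = A - BD†C for all such Y. -/
open Matrix LinearMap

lemma exists_fac {a b c : ℕ} (M : Matrix (Fin a) (Fin b) ℝ) (N : Matrix (Fin a) (Fin c) ℝ)
    (h : LinearMap.range M.mulVecLin ≤ LinearMap.range N.mulVecLin) :
    ∃ X : Matrix (Fin c) (Fin b) ℝ, N * X = M := by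
  choose f hf using fun j => h ⟨Pi.single j 1, rfl⟩
  refine ⟨Matrix.of fun i j => f j i, ?_⟩
  ext i j
  have := congrFun (hf j) i
  simp only [Matrix.mulVecLin_apply, Matrix.mulVec, dotProduct] at this
  simp only [Matrix.mul_apply, Matrix.of_apply]
  rw [this]
  simp [Pi.single_apply, mul_ite]

theorem stmt18
    {m n s p : ℕ}
    (A : Matrix (Fin m) (Fin n) ℝ) (B : Matrix (Fin m) (Fin p) ℝ)
    (C : Matrix (Fin s) (Fin n) ℝ) (D : Matrix (Fin s) (Fin p) ℝ)
    (Dd : Matrix (Fin p) (Fin s) ℝ) (hD : IsMoorePenrose D Dd)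
    (hBt : LinearMap.range (Matrix.mulVecLin (Bᵀ)) ≤ LinearMap.range (Matrix.mulVecLin (Dᵀ)))
    (hC : LinearMap.range (Matrix.mulVecLin (C)) ≤ LinearMap.range (Matrix.mulVecLin (D))) :
    ∀ Y : Matrix (Fin p) (Fin s) ℝ, D * Y * D = D → A - B * Y * C = A - B * Dd * C := by
  intro Y hY
  obtain ⟨U, hU⟩ := exists_fac Bᵀ Dᵀ hBt
  obtain ⟨W, hW⟩ := exists_fac C D hC
  have hB : B = Uᵀ * D := by
    have := congrArg Matrix.transpose hU
    simpa [Matrix.transpose_mul] using this.symm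
  have key : ∀ Z : Matrix (Fin p) (Fin s) ℝ, D * Z * D = D → B * Z * C = Uᵀ * D * W := by
    intro Z hZ
    calc B * Z * C = Uᵀ * (D * Z * D) * W := by rw [hB, ← hW]; simp only [Matrix.mul_assoc]
    _ = Uᵀ * D * W := by rw [hZ]
  rw [key Y hY, key Dd hD.1]
end

section
/- There exist A, B, C, D with R(B) ⊆ R(A) and R(Cᵀ) ⊆ R(Aᵀ) such that H† ≠ J, where H = [[A†, -A†B],[CA†, D - CA†B]] and J = [[A - BD†C, BD†],[-D†C, D†]]. Concretely, this holds for A = [[1,-1],[2,-2]], B = [1;2], C = [-1,1], D = [0]. -/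
open Matrix LinearMap

theorem stmt19 :
    ∃ (A : Matrix (Fin 2) (Fin 2) ℝ) (B : Matrix (Fin 2) (Fin 1) ℝ)
      (C : Matrix (Fin 1) (Fin 2) ℝ) (D : Matrix (Fin 1) (Fin 1) ℝ),
      A = !![1, -1; 2, -2] ∧ B = !![1; 2] ∧ C = !![-1, 1] ∧ D = !![0] ∧
      LinearMap.range (Matrix.mulVecLin (B)) ≤ LinearMap.range (Matrix.mulVecLin (A)) ∧
      LinearMap.range (Matrix.mulVecLin (Cᵀ)) ≤ LinearMap.range (Matrix.mulVecLin (Aᵀ)) ∧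
      ∀ (Ad : Matrix (Fin 2) (Fin 2) ℝ) (Dd : Matrix (Fin 1) (Fin 1) ℝ)
        (Hd : Matrix (Fin 2 ⊕ Fin 1) (Fin 2 ⊕ Fin 1) ℝ),
        IsMoorePenrose A Ad → IsMoorePenrose D Dd →
        IsMoorePenrose (Matrix.fromBlocks Ad (-(Ad * B)) (C * Ad) (D - C * Ad * B)) Hd →
        Hd ≠ Matrix.fromBlocks (A - B * Dd * C) (B * Dd) (-(Dd * C)) Dd := by
  have hfac : (!![1, -1; 2, -2] : Matrix (Fin 2) (Fin 2) ℝ) *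
      (!![1; 0] : Matrix (Fin 2) (Fin 1) ℝ) = !![1; 2] := by
    ext i j
    fin_cases i <;> fin_cases j <;>
      simp [Matrix.mul_apply, Fin.sum_univ_two]
  have hfac2 : (!![1, -1; 2, -2] : Matrix (Fin 2) (Fin 2) ℝ)ᵀ *
      (!![-1; 0] : Matrix (Fin 2) (Fin 1) ℝ) = (!![-1, 1] : Matrix (Fin 1) (Fin 2) ℝ)ᵀ := by
    ext i j
    fin_cases i <;> fin_cases j <;>
      simp [Matrix.mul_apply, Fin.sum_univ_two]
  refine ⟨!![1, -1; 2, -2], !![1; 2], !![-1, 1], !![0], rfl, rfl, rfl, rfl, ?_, ?_, ?_⟩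
  · rintro x ⟨y, rfl⟩
    refine ⟨(!![1; 0] : Matrix (Fin 2) (Fin 1) ℝ).mulVec y, ?_⟩
    rw [Matrix.mulVecLin_apply, Matrix.mulVecLin_apply, Matrix.mulVec_mulVec, hfac]
  · rintro x ⟨y, rfl⟩
    refine ⟨(!![-1; 0] : Matrix (Fin 2) (Fin 1) ℝ).mulVec y, ?_⟩
    rw [Matrix.mulVecLin_apply, Matrix.mulVecLin_apply, Matrix.mulVec_mulVec, hfac2]
  · intro Ad Dd Hd hA hD hH hEq
    -- Dd = 0
    have hD0 : Dd = 0 := by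
      have h := hD.2.1
      have h0 : (!![(0 : ℝ)] : Matrix (Fin 1) (Fin 1) ℝ) = 0 := by
        ext i j; fin_cases i; fin_cases j; rfl
      rw [h0, Matrix.mul_zero, Matrix.zero_mul] at h
      exact h.symm
    subst hEq
    rw [hD0] at hH
    -- A * Ad * B = B
    have hAAdB : (!![1, -1; 2, -2] : Matrix (Fin 2) (Fin 2) ℝ) * Ad *
        (!![1; 2] : Matrix (Fin 2) (Fin 1) ℝ) = !![1; 2] := by
      nth_rewrite 1 [← hfac]
      rw [← Matrix.mul_assoc, Matrix.mul_assoc _ Ad, ← Matrix.mul_assoc, hA.1, hfac]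
    -- symmetry condition (Hd * H)ᵀ = Hd * H
    have hs := hH.2.2.2
    rw [Matrix.fromBlocks_multiply, Matrix.fromBlocks_transpose] at hs
    have h12 := congrArg Matrix.toBlocks₁₂ hs
    simp only [Matrix.toBlocks_fromBlocks₁₂, Matrix.toBlocks_fromBlocks₂₁,
      sub_zero, neg_zero, Matrix.zero_mul, zero_mul, mul_zero, Matrix.mul_zero,
      add_zero, zero_add, Matrix.transpose_zero, Matrix.mul_neg] at h12
    rw [← Matrix.mul_assoc, hAAdB] at h12
    have := congrFun (congrFun h12 0) 0
    norm_num at this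
end
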